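/- arXiv:2601.09646 — 4 statements merged into one kernel-verified Lean document; each statement's English description precedes it below -/
import Mathlib

section
/- Suppose lim_{x→a⁺} s(x) = ∞ and the right boundary b is natural, i.e. lim_{x→b} s(x)·M[a,x] = ∞ and ∫_{x₀}^{b} M[x₀,v] s(v) dv = ∞ (so ξ(x) → ∞ as x → b). Then for any fixed y₀ ∈ (a,b): lim_{y→b} g(y)/ξ(y) = c̄(b), lim_{y→b} (g(y) − g(y₀))/(ξ(y) − ξ(y₀)) = c̄(b), and (g(y) − g(w))/(ξ(y) − ξ(w)) → c̄(b) as (w,y) → (b,b) with w < y < b. -/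
open MeasureTheory Filter Set Topology
open scoped Classical

noncomputable section

/-- The state interval `(a, b)` where `a` is real and `b ∈ (a, ∞]`. -/
def stInt (a : ℝ) (b : EReal) : Set ℝ := {x : ℝ | a < x ∧ (x : EReal) < b}

/-- The filter of approach to the right endpoint `b ∈ (a, ∞]`:
`atTop` when `b = ∞`, and the left-neighborhood filter of `b` otherwise. -/
def atB (b : EReal) : Filter ℝ :=
  if b = ⊤ then Filter.atTop else nhdsWithin b.toReal (Set.Iio b.toReal)

/-- The scale density `s(x) = exp(-∫_{x₀}^x 2μ/σ²)`. -/
def sDen (μ σ : ℝ → ℝ) (x₀ x : ℝ) : ℝ :=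
  Real.exp (-(∫ y in x₀..x, 2 * μ y / (σ y) ^ 2))

/-- The speed density `m(x) = 2/(σ(x)² s(x))`. -/
def mDen (μ σ : ℝ → ℝ) (x₀ x : ℝ) : ℝ :=
  2 / ((σ x) ^ 2 * sDen μ σ x₀ x)

/-- `M[a,x] = ∫_a^x m(u) du`. -/
def Mab (μ σ : ℝ → ℝ) (x₀ a x : ℝ) : ℝ :=
  ∫ u in Set.Ioo a x, mDen μ σ x₀ u

/-- The time potential `ξ(x) = ∫_{x₀}^x M[a,v] s(v) dv`. -/
def xiF (μ σ : ℝ → ℝ) (x₀ a x : ℝ) : ℝ :=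
  ∫ v in x₀..x, Mab μ σ x₀ a v * sDen μ σ x₀ v

/-- The running reward potential `g(x) = ∫_{x₀}^x (∫_a^v c(u) m(u) du) s(v) dv`. -/
def gF (μ σ c : ℝ → ℝ) (x₀ a x : ℝ) : ℝ :=
  ∫ v in x₀..x, (∫ u in Set.Ioo a v, c u * mDen μ σ x₀ u) * sDen μ σ x₀ v

/-- `h(x) = (∫_a^x (γ c(u) + p μ(u)) m(u) du) / M[a,x]`. -/
def hF (μ σ c : ℝ → ℝ) (x₀ a p γ x : ℝ) : ℝ :=
  (∫ u in Set.Ioo a x, (γ * c u + p * μ u) * mDen μ σ x₀ u) / Mab μ σ x₀ a x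

/-- The long-term average reward `F(w,y)` of the `(w,y)`-impulse policy. -/
def FF (μ σ c : ℝ → ℝ) (x₀ a p K γ w y : ℝ) : ℝ :=
  (p * (y - w) - K + γ * (gF μ σ c x₀ a y - gF μ σ c x₀ a w)) /
    (xiF μ σ x₀ a y - xiF μ σ x₀ a w)

/-- `c̄(b)`: equals `⟨c,π⟩` when `M[a,b] < ∞` and the boundary value `c(b)` otherwise. -/
def cbar (μ σ c : ℝ → ℝ) (x₀ a : ℝ) (b : EReal) (cb : ℝ) : ℝ :=
  if MeasureTheory.IntegrableOn (mDen μ σ x₀) (stInt a b) MeasureTheory.volume then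
    (∫ u in stInt a b, c u * mDen μ σ x₀ u) / (∫ u in stInt a b, mDen μ σ x₀ u)
  else cb


lemma aux_stInt_top {a : ℝ} {b : EReal} (hb : b = ⊤) : stInt a b = Ioi a := by
  ext x; simp [stInt, hb]

lemma aux_stInt_coe {a : ℝ} {b : EReal} (hab : (a : EReal) < b) (hb : b ≠ ⊤) : stInt a b = Ioo a b.toReal := by
  have hbb : b ≠ ⊥ := ((EReal.bot_lt_coe a).trans hab).ne'
  have hbe : (b.toReal : EReal) = b := EReal.coe_toReal hb hbb
  ext x
  constructor
  · rintro ⟨h1, h2⟩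
    refine ⟨h1, ?_⟩
    rw [← hbe] at h2
    exact_mod_cast h2
  · rintro ⟨h1, h2⟩
    refine ⟨h1, ?_⟩
    rw [← hbe]
    exact_mod_cast h2

lemma aux_measurableSet_stInt {a : ℝ} {b : EReal} (hab : (a : EReal) < b) : MeasurableSet (stInt a b) := by
  by_cases hb : b = ⊤
  · rw [aux_stInt_top hb]; exact measurableSet_Ioi
  · rw [aux_stInt_coe hab hb]; exact measurableSet_Ioo

lemma aux_isOpen_stInt {a : ℝ} {b : EReal} (hab : (a : EReal) < b) : IsOpen (stInt a b) := by
  by_cases hb : b = ⊤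
  · rw [aux_stInt_top hb]; exact isOpen_Ioi
  · rw [aux_stInt_coe hab hb]; exact isOpen_Ioo

lemma aux_ordConnected_stInt {a : ℝ} {b : EReal} (hab : (a : EReal) < b) : OrdConnected (stInt a b) := by
  by_cases hb : b = ⊤
  · rw [aux_stInt_top hb]; exact ordConnected_Ioi
  · rw [aux_stInt_coe hab hb]; exact ordConnected_Ioo

lemma aux_Ioo_subset {a v : ℝ} {b : EReal} (hv : v ∈ stInt a b) : Ioo a v ⊆ stInt a b := fun z hz =>
  ⟨hz.1, lt_trans (by exact_mod_cast hz.2) hv.2⟩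

lemma aux_exists_gt {a z : ℝ} {b : EReal} (hab : (a : EReal) < b) (hz : z ∈ stInt a b) :
    ∃ z' ∈ stInt a b, z < z' := by
  by_cases hb : b = ⊤
  · exact ⟨z + 1, by rw [aux_stInt_top hb] at hz ⊢; exact lt_trans (mem_Ioi.1 hz) (by linarith), by linarith⟩
  · rw [aux_stInt_coe hab hb] at hz ⊢
    exact ⟨(z + b.toReal) / 2, ⟨by linarith [hz.1, hz.2], by linarith [hz.2]⟩, by linarith [hz.2]⟩

lemma aux_atB_mem {a x₁ : ℝ} {b : EReal} (hab : (a : EReal) < b) (hx₁ : x₁ ∈ stInt a b) :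
    ∀ᶠ v in atB b, v ∈ stInt a b ∧ x₁ < v := by
  by_cases hb : b = ⊤
  · rw [atB, if_pos hb]
    filter_upwards [eventually_ge_atTop (x₁ + 1)] with v hv
    rw [aux_stInt_top hb] at hx₁ ⊢
    exact ⟨lt_of_lt_of_le (by exact lt_of_lt_of_le (mem_Ioi.1 hx₁) (by linarith)) le_rfl, by linarith⟩
  · rw [atB, if_neg hb]
    rw [aux_stInt_coe hab hb] at hx₁
    have : Ioo x₁ b.toReal ∈ 𝓝[<] b.toReal :=
      Ioo_mem_nhdsLT_of_mem ⟨hx₁.2, le_rfl⟩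
    filter_upwards [this] with v hv
    rw [aux_stInt_coe hab hb]
    exact ⟨⟨lt_trans hx₁.1 hv.1, hv.2⟩, hv.1⟩

lemma aux_atB_extract {a z : ℝ} {b : EReal} (hab : (a : EReal) < b) (hz : z ∈ stInt a b) {P : ℝ → Prop}
    (h : ∀ᶠ v in atB b, P v) :
    ∃ x₁ ∈ stInt a b, z ≤ x₁ ∧ ∀ v ∈ stInt a b, x₁ < v → P v := by
  by_cases hb : b = ⊤
  · rw [atB, if_pos hb] at h
    obtain ⟨N, hN⟩ := eventually_atTop.1 h
    refine ⟨max z N, ?_, le_max_left _ _, fun v hv hlt => hN v (le_of_lt (lt_of_le_of_lt (le_max_right _ _) hlt))⟩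
    rw [aux_stInt_top hb] at hz ⊢
    exact lt_of_lt_of_le (mem_Ioi.1 hz) (le_max_left _ _)
  · rw [atB, if_neg hb] at h
    rw [aux_stInt_coe hab hb] at hz
    obtain ⟨u, hu, hsub⟩ := mem_nhdsLT_iff_exists_Ioo_subset.1 h
    refine ⟨max z u, ?_, le_max_left _ _, fun v hv hlt => ?_⟩
    · rw [aux_stInt_coe hab hb]
      exact ⟨lt_of_lt_of_le hz.1 (le_max_left _ _), max_lt hz.2 hu⟩
    · rw [aux_stInt_coe hab hb] at hv
      exact hsub ⟨lt_of_le_of_lt (le_max_right _ _) hlt, hv.2⟩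

instance aux_atB_neBot (b : EReal) : (atB b).NeBot := by
  rw [atB]; split
  · infer_instance
  · infer_instance

/-- Splitting the integral over `Ioo a v`. -/
lemma aux_split {a w v : ℝ} {b : EReal} {h : ℝ → ℝ} (hI : ∀ x ∈ stInt a b, IntegrableOn h (Ioo a x))
    (hw : w ∈ stInt a b) (hv : v ∈ stInt a b) (hwv : w ≤ v) :
    ∫ u in Ioo a v, h u = (∫ u in Ioo a w, h u) + ∫ u in Ioo w v, h u := by
  have hdisj : Disjoint (Ioo a w) (Ico w v) :=
    Set.disjoint_left.mpr fun u h1 h2 => absurd h1.2 (not_lt.2 h2.1)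
  have hsub : Ico w v ⊆ Ioo a v := fun u hu => ⟨lt_of_lt_of_le hw.1 hu.1, hu.2⟩
  rw [← Ioo_union_Ico_eq_Ioo hw.1 hwv,
    setIntegral_union hdisj measurableSet_Ico ((hI v hv).mono_set (Ioo_subset_Ioo_right hwv))
      ((hI v hv).mono_set hsub), integral_Ico_eq_integral_Ioo]

lemma aux_mono {a w v : ℝ} {b : EReal} {h : ℝ → ℝ} (hI : ∀ x ∈ stInt a b, IntegrableOn h (Ioo a x))
    (hnn : ∀ u ∈ stInt a b, 0 ≤ h u)
    (hw : w ∈ stInt a b) (hv : v ∈ stInt a b) (hwv : w ≤ v) :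
    (∫ u in Ioo a w, h u) ≤ ∫ u in Ioo a v, h u := by
  rw [aux_split hI hw hv hwv]
  have : 0 ≤ ∫ u in Ioo w v, h u :=
    setIntegral_nonneg measurableSet_Ioo fun u hu =>
      hnn u ⟨lt_trans hw.1 hu.1, lt_trans (by exact_mod_cast hu.2) hv.2⟩
  linarith

/-- interval-integral form of the primitive identity. -/
lemma aux_primitive_eq {a x₀ v : ℝ} {b : EReal} {h : ℝ → ℝ} (hI : ∀ x ∈ stInt a b, IntegrableOn h (Ioo a x))
    (hx₀ : x₀ ∈ stInt a b) (hv : v ∈ stInt a b) :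
    ∫ u in Ioo a v, h u = (∫ u in Ioo a x₀, h u) + ∫ u in x₀..v, h u := by
  rcases le_total x₀ v with hle | hle
  · rw [aux_split hI hx₀ hv hle, intervalIntegral.integral_of_le hle,
      integral_Ioc_eq_integral_Ioo]
  · rw [aux_split hI hv hx₀ hle, intervalIntegral.integral_symm,
      intervalIntegral.integral_of_le hle, integral_Ioc_eq_integral_Ioo]
    ring

/-- Continuity of the primitive `x ↦ ∫ x₀..x h` on the open ord-connected set. -/
lemma aux_primitive_contAt {a x₀ v : ℝ} {b : EReal} {h : ℝ → ℝ} (hab : (a : EReal) < b) (hcont : ContinuousOn h (stInt a b))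
    (hx₀ : x₀ ∈ stInt a b) (hv : v ∈ stInt a b) :
    ContinuousAt (fun x => ∫ u in x₀..x, h u) v := by
  have hO := aux_isOpen_stInt hab
  have hC := aux_ordConnected_stInt hab
  have hint : IntervalIntegrable h volume x₀ v :=
    (hcont.mono (hC.uIcc_subset hx₀ hv)).intervalIntegrable
  exact (intervalIntegral.integral_hasDerivAt_right hint
    (hcont.stronglyMeasurableAtFilter hO v hv) (hcont.continuousAt (hO.mem_nhds hv))).continuousAt

lemma aux_sDen_pos {x₀ v : ℝ} {μ σ : ℝ → ℝ} : 0 < sDen μ σ x₀ v := Real.exp_pos _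

lemma aux_sDen_cont {a x₀ : ℝ} {b : EReal} {μ σ : ℝ → ℝ} (hab : (a : EReal) < b) (hμcont : ContinuousOn μ (stInt a b))
    (hσcont : ContinuousOn σ (stInt a b)) (hσpos : ∀ x ∈ stInt a b, 0 < (σ x) ^ 2)
    (hx₀ : x₀ ∈ stInt a b) : ContinuousOn (sDen μ σ x₀) (stInt a b) := by
  have hfc : ContinuousOn (fun y => 2 * μ y / σ y ^ 2) (stInt a b) :=
    (continuousOn_const.mul hμcont).div (hσcont.pow 2) fun x hx => (hσpos x hx).ne'
  intro x hx
  exact (Real.continuous_exp.continuousAt.comp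
    (aux_primitive_contAt hab hfc hx₀ hx).neg).continuousWithinAt

lemma aux_mDen_pos {a x₀ v : ℝ} {b : EReal} {μ σ : ℝ → ℝ} (hσpos : ∀ x ∈ stInt a b, 0 < (σ x) ^ 2) (hv : v ∈ stInt a b) :
    0 < mDen μ σ x₀ v :=
  div_pos two_pos (mul_pos (hσpos v hv) aux_sDen_pos)

lemma aux_mDen_cont {a x₀ : ℝ} {b : EReal} {μ σ : ℝ → ℝ} (hab : (a : EReal) < b) (hμcont : ContinuousOn μ (stInt a b))
    (hσcont : ContinuousOn σ (stInt a b)) (hσpos : ∀ x ∈ stInt a b, 0 < (σ x) ^ 2)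
    (hx₀ : x₀ ∈ stInt a b) : ContinuousOn (mDen μ σ x₀) (stInt a b) :=
  continuousOn_const.div
    ((hσcont.pow 2).mul (aux_sDen_cont hab hμcont hσcont hσpos hx₀))
    fun x hx => (mul_pos (hσpos x hx) aux_sDen_pos).ne'

/-- Continuity of `v ↦ ∫_{Ioo a v} h`. -/
lemma aux_A_cont {a x₀ : ℝ} {b : EReal} {h : ℝ → ℝ} (hab : (a : EReal) < b) (hcont : ContinuousOn h (stInt a b))
    (hI : ∀ x ∈ stInt a b, IntegrableOn h (Ioo a x)) (hx₀ : x₀ ∈ stInt a b) :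
    ContinuousOn (fun v => ∫ u in Ioo a v, h u) (stInt a b) := by
  have : ContinuousOn (fun v => (∫ u in Ioo a x₀, h u) + ∫ u in x₀..v, h u) (stInt a b) :=
    continuousOn_const.add fun x hx =>
      (aux_primitive_contAt hab hcont hx₀ hx).continuousWithinAt
  exact this.congr fun v hv => aux_primitive_eq hI hx₀ hv

/-- An exhausting sequence of the state interval. -/
lemma aux_exhaust {a x₀ : ℝ} {b : EReal} (hab : (a : EReal) < b) (hx₀ : x₀ ∈ stInt a b) :
    ∃ u : ℕ → ℝ, Monotone u ∧ (∀ n, u n ∈ stInt a b) ∧ (⋃ n, Ioo a (u n)) = stInt a b := by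
  by_cases hb : b = ⊤
  · refine ⟨fun n => x₀ + n, fun i j hij => by simp [hij], fun n => ?_, ?_⟩
    · rw [aux_stInt_top hb]
      rw [aux_stInt_top hb] at hx₀
      simp only [mem_Ioi] at hx₀ ⊢
      have : (0:ℝ) ≤ n := Nat.cast_nonneg n
      linarith
    · rw [aux_stInt_top hb]
      ext x
      simp only [mem_iUnion, mem_Ioo, mem_Ioi]
      constructor
      · rintro ⟨n, hn, -⟩; exact hn
      · intro hx
        obtain ⟨n, hn⟩ := exists_nat_gt (x - x₀)
        exact ⟨n, hx, by linarith⟩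
  · have hx₀' : x₀ ∈ Ioo a b.toReal := by rwa [aux_stInt_coe hab hb] at hx₀
    set r := b.toReal with hr
    have hxr : x₀ < r := hx₀'.2
    refine ⟨fun n => r - (r - x₀) / 2 ^ n, fun i j hij => ?_, fun n => ?_, ?_⟩
    · have h1 : (2:ℝ) ^ i ≤ 2 ^ j := by
        apply pow_le_pow_right₀ (by norm_num) hij
      have h2 : (r - x₀) / 2 ^ j ≤ (r - x₀) / 2 ^ i := by
        apply div_le_div_of_nonneg_left (by linarith) (by positivity) h1
      simp only; linarith
    · rw [aux_stInt_coe hab hb]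
      have h1 : (0:ℝ) < (r - x₀) / 2 ^ n := div_pos (by linarith) (by positivity)
      have h2 : (r - x₀) / 2 ^ n ≤ (r - x₀) / 2 ^ 0 := by
        apply div_le_div_of_nonneg_left (by linarith) (by positivity)
        apply pow_le_pow_right₀ (by norm_num) (Nat.zero_le n)
      simp only [pow_zero, div_one] at h2
      exact ⟨by simp only; linarith [hx₀'.1], by simp only; linarith⟩
    · rw [aux_stInt_coe hab hb]
      ext x
      simp only [mem_iUnion, mem_Ioo]
      constructor
      · rintro ⟨n, hn1, hn2⟩
        have h1 : (0:ℝ) < (r - x₀) / 2 ^ n := div_pos (by linarith) (by positivity)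
        exact ⟨hn1, by linarith⟩
      · rintro ⟨hx1, hx2⟩
        obtain ⟨n, hn⟩ := exists_pow_lt_of_lt_one (show (0:ℝ) < (r - x) / (r - x₀) by
          apply div_pos <;> linarith) (show (1:ℝ)/2 < 1 by norm_num)
        refine ⟨n, hx1, ?_⟩
        have h2 : ((1:ℝ)/2) ^ n = 1 / 2 ^ n := by
          rw [div_pow, one_pow]
        rw [h2, div_lt_div_iff₀ (by positivity) (by linarith)] at hn
        have h3 : (r - x₀) / 2 ^ n < r - x := by
          rw [div_lt_iff₀ (by positivity)]
          linarith
        linarith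

/-- If `h ≥ 0` is integrable on the whole interval, the running integrals converge to the
full integral along `atB`. -/
lemma aux_tendsto_full {a x₀ : ℝ} {b : EReal} {h : ℝ → ℝ}
    (hab : (a : EReal) < b) (hx₀ : x₀ ∈ stInt a b)
    (hnn : ∀ u ∈ stInt a b, 0 ≤ h u)
    (hI : ∀ x ∈ stInt a b, IntegrableOn h (Ioo a x))
    (hint : IntegrableOn h (stInt a b)) :
    Tendsto (fun v => ∫ u in Ioo a v, h u) (atB b) (𝓝 (∫ u in stInt a b, h u)) := by
  obtain ⟨u, humono, humem, huU⟩ := aux_exhaust hab hx₀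
  have hseq : Tendsto (fun n => ∫ x in Ioo a (u n), h x) atTop
      (𝓝 (∫ x in stInt a b, h x)) := by
    have := tendsto_setIntegral_of_monotone (μ := volume) (f := h)
      (s := fun n => Ioo a (u n)) (fun n => measurableSet_Ioo)
      (fun i j hij => Ioo_subset_Ioo_right (humono hij)) (by rwa [huU])
    rwa [huU] at this
  rw [Metric.tendsto_nhds]
  intro ε hε
  rw [Metric.tendsto_nhds] at hseq
  obtain ⟨n, hn⟩ := (hseq ε hε).exists
  filter_upwards [aux_atB_mem hab (humem n)] with v hv
  rw [Real.dist_eq] at hn ⊢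
  have hle1 : (∫ x in Ioo a (u n), h x) ≤ ∫ x in Ioo a v, h x :=
    aux_mono hI hnn (humem n) hv.1 hv.2.le
  have hle2 : (∫ x in Ioo a v, h x) ≤ ∫ x in stInt a b, h x := by
    apply setIntegral_mono_set hint
    · filter_upwards [ae_restrict_mem (aux_measurableSet_stInt hab)] with x hx using hnn x hx
    · exact HasSubset.Subset.eventuallyLE (aux_Ioo_subset hv.1)
  rw [abs_sub_lt_iff] at hn ⊢
  constructor <;> [linarith [hn.1]; linarith [hn.2]]

/-- If the running integrals are uniformly bounded, `h` is integrable on the whole interval. -/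
lemma aux_integrableOn_of_bdd {a x₀ : ℝ} {b : EReal} {h : ℝ → ℝ} {C : ℝ}
    (hab : (a : EReal) < b) (hx₀ : x₀ ∈ stInt a b)
    (hcont : ContinuousOn h (stInt a b))
    (hnn : ∀ u ∈ stInt a b, 0 ≤ h u)
    (hI : ∀ x ∈ stInt a b, IntegrableOn h (Ioo a x))
    (hC : ∀ v ∈ stInt a b, (∫ u in Ioo a v, h u) ≤ C) :
    IntegrableOn h (stInt a b) := by
  obtain ⟨u, humono, humem, huU⟩ := aux_exhaust hab hx₀
  refine ⟨hcont.aestronglyMeasurable (aux_measurableSet_stInt hab), ?_⟩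
  rw [hasFiniteIntegral_iff_norm]
  have hmeasU : ∀ n, MeasurableSet (Ioo a (u n)) := fun n => measurableSet_Ioo
  have hmono' : Monotone fun n => Ioo a (u n) := fun i j hij =>
    Ioo_subset_Ioo_right (humono hij)
  have key : ∀ n, (∫⁻ x in Ioo a (u n), ENNReal.ofReal ‖h x‖) ≤ ENNReal.ofReal C := by
    intro n
    have hIn := hI (u n) (humem n)
    have : (∫⁻ x in Ioo a (u n), ENNReal.ofReal ‖h x‖) =
        ENNReal.ofReal (∫ x in Ioo a (u n), ‖h x‖) := by
      rw [← ofReal_integral_eq_lintegral_ofReal hIn.norm]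
      filter_upwards with x using norm_nonneg _
    rw [this]
    apply ENNReal.ofReal_le_ofReal
    calc (∫ x in Ioo a (u n), ‖h x‖) = ∫ x in Ioo a (u n), h x := by
          apply setIntegral_congr_fun measurableSet_Ioo
          intro x hx
          exact Real.norm_of_nonneg (hnn x (aux_Ioo_subset (humem n) hx))
      _ ≤ C := hC (u n) (humem n)
  set ν := volume.withDensity (fun x => ENNReal.ofReal ‖h x‖) with hν
  have hU : (∫⁻ x in stInt a b, ENNReal.ofReal ‖h x‖) = ν (stInt a b) :=
    (withDensity_apply _ (aux_measurableSet_stInt hab)).symm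
  have hU2 : ν (stInt a b) = ⨆ n, ν (Ioo a (u n)) := by
    rw [← huU]
    exact Directed.measure_iUnion (hmono'.directed_le)
  rw [hU, hU2]
  have hle : (⨆ n, ν (Ioo a (u n))) ≤ ENNReal.ofReal C := by
    refine iSup_le fun n => ?_
    rw [hν, withDensity_apply _ (hmeasU n)]
    exact key n
  exact lt_of_le_of_lt hle ENNReal.ofReal_lt_top

/-- Positivity of `M[a,v]` for `v` in the interval. -/
lemma aux_M_pos {a x₀ v : ℝ} {b : EReal} {μ σ : ℝ → ℝ}
    (hσpos : ∀ x ∈ stInt a b, 0 < (σ x) ^ 2)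
    (hMfin : ∀ x ∈ stInt a b, IntegrableOn (mDen μ σ x₀) (Ioo a x))
    (hv : v ∈ stInt a b) : 0 < Mab μ σ x₀ a v := by
  have hint : IntervalIntegrable (mDen μ σ x₀) volume a v := by
    rw [intervalIntegrable_iff_integrableOn_Ioo_of_le hv.1.le]
    exact hMfin v hv
  have := intervalIntegral.intervalIntegral_pos_of_pos_on hint
    (fun x hx => aux_mDen_pos hσpos (aux_Ioo_subset hv hx)) hv.1
  rwa [intervalIntegral.integral_of_le hv.1.le, integral_Ioc_eq_integral_Ioo] at this

/-- In the non-integrable case, `M[a,v] → ∞`. -/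
lemma aux_M_atTop {a x₀ : ℝ} {b : EReal} {μ σ : ℝ → ℝ}
    (hab : (a : EReal) < b) (hx₀ : x₀ ∈ stInt a b)
    (hμcont : ContinuousOn μ (stInt a b)) (hσcont : ContinuousOn σ (stInt a b))
    (hσpos : ∀ x ∈ stInt a b, 0 < (σ x) ^ 2)
    (hMfin : ∀ x ∈ stInt a b, IntegrableOn (mDen μ σ x₀) (Ioo a x))
    (hnint : ¬ IntegrableOn (mDen μ σ x₀) (stInt a b)) :
    Tendsto (Mab μ σ x₀ a) (atB b) atTop := by
  have hnn : ∀ u ∈ stInt a b, 0 ≤ mDen μ σ x₀ u := fun u hu => (aux_mDen_pos hσpos hu).le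
  rw [tendsto_atTop]
  intro C
  by_cases hC : ∃ v ∈ stInt a b, C ≤ Mab μ σ x₀ a v
  · obtain ⟨v, hv, hvC⟩ := hC
    filter_upwards [aux_atB_mem hab hv] with y hy
    exact le_trans hvC (aux_mono hMfin hnn hv hy.1 hy.2.le)
  · push_neg at hC
    exact absurd (aux_integrableOn_of_bdd hab hx₀
      (aux_mDen_cont hab hμcont hσcont hσpos hx₀) hnn hMfin
      (fun v hv => (hC v hv).le)) hnint

/-- `c ≤ cb` on the interval. -/
lemma aux_c_le_cb {a : ℝ} {b : EReal} {c : ℝ → ℝ} {cb : ℝ}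
    (hab : (a : EReal) < b) (hcmono : MonotoneOn c (stInt a b))
    (hcb : Tendsto c (atB b) (𝓝 cb)) : ∀ u ∈ stInt a b, c u ≤ cb := fun u hu =>
  ge_of_tendsto hcb ((aux_atB_mem hab hu).mono fun v hv => hcmono hu hv.1 hv.2.le)

/-- Integrability of `c·m` on subsets. -/
lemma aux_cm_int {a x₀ : ℝ} {b : EReal} {μ σ c : ℝ → ℝ} {cb : ℝ} {T : Set ℝ}
    (hab : (a : EReal) < b) (hx₀ : x₀ ∈ stInt a b)
    (hμcont : ContinuousOn μ (stInt a b)) (hσcont : ContinuousOn σ (stInt a b))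
    (hσpos : ∀ x ∈ stInt a b, 0 < (σ x) ^ 2)
    (hccont : ContinuousOn c (stInt a b))
    (hcnn : ∀ x ∈ stInt a b, 0 ≤ c x)
    (hcle : ∀ u ∈ stInt a b, c u ≤ cb)
    (hmint : IntegrableOn (mDen μ σ x₀) T)
    (hT : MeasurableSet T) (hsub : T ⊆ stInt a b) :
    IntegrableOn (fun u => c u * mDen μ σ x₀ u) T := by
  have hmcont := aux_mDen_cont hab hμcont hσcont hσpos hx₀
  refine Integrable.mono (hmint.const_mul cb)
    (((hccont.mono hsub).mul (hmcont.mono hsub)).aestronglyMeasurable hT) ?_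
  filter_upwards [ae_restrict_mem hT] with u hu
  have h1 : 0 ≤ c u := hcnn u (hsub hu)
  have h2 : c u ≤ cb := hcle u (hsub hu)
  have h3 : 0 < mDen μ σ x₀ u := aux_mDen_pos hσpos (hsub hu)
  rw [Real.norm_eq_abs, Real.norm_eq_abs, abs_of_nonneg (mul_nonneg h1 h3.le),
    abs_of_nonneg (mul_nonneg (h1.trans h2) h3.le)]
  exact mul_le_mul_of_nonneg_right h2 h3.le

/-- The key estimate: eventually `|∫ c·m - c̄·M| ≤ ε·M`. -/
lemma aux_keyE {a x₀ : ℝ} {b : EReal} {μ σ c : ℝ → ℝ} {cb : ℝ}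
    (hab : (a : EReal) < b) (hx₀ : x₀ ∈ stInt a b)
    (hμcont : ContinuousOn μ (stInt a b)) (hσcont : ContinuousOn σ (stInt a b))
    (hσpos : ∀ x ∈ stInt a b, 0 < (σ x) ^ 2)
    (hMfin : ∀ x ∈ stInt a b, IntegrableOn (mDen μ σ x₀) (Ioo a x))
    (hccont : ContinuousOn c (stInt a b))
    (hcnn : ∀ x ∈ stInt a b, 0 ≤ c x) (hcmono : MonotoneOn c (stInt a b))
    (hcb : Tendsto c (atB b) (𝓝 cb))
    {ε : ℝ} (hε : 0 < ε) :
    ∀ᶠ v in atB b, v ∈ stInt a b ∧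
      |(∫ u in Ioo a v, c u * mDen μ σ x₀ u) - cbar μ σ c x₀ a b cb * Mab μ σ x₀ a v|
        ≤ ε * Mab μ σ x₀ a v := by
  set S := stInt a b with hS
  set m := mDen μ σ x₀ with hm
  have hcle := aux_c_le_cb hab hcmono hcb
  have hcmint : ∀ v ∈ S, IntegrableOn (fun u => c u * m u) (Ioo a v) := fun v hv =>
    aux_cm_int hab hx₀ hμcont hσcont hσpos hccont hcnn hcle (hMfin v hv)
      measurableSet_Ioo (aux_Ioo_subset hv)
  have hmnn : ∀ u ∈ S, 0 ≤ m u := fun u hu => (aux_mDen_pos hσpos hu).le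
  by_cases hMint : IntegrableOn m S volume
  · -- integrable case
    have hLdef : cbar μ σ c x₀ a b cb = (∫ u in S, c u * m u) / (∫ u in S, m u) := by
      rw [cbar, if_pos hMint]
    set Cb := ∫ u in S, c u * m u with hCb
    set Mb := ∫ u in S, m u with hMb
    have hMbpos : 0 < Mb := by
      have h1 : 0 < Mab μ σ x₀ a x₀ := aux_M_pos hσpos hMfin hx₀
      have h2 : Mab μ σ x₀ a x₀ ≤ Mb := by
        apply setIntegral_mono_set hMint
        · filter_upwards [ae_restrict_mem (aux_measurableSet_stInt hab)] with x hx
            using hmnn x hx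
        · exact HasSubset.Subset.eventuallyLE (aux_Ioo_subset hx₀)
      linarith
    have hcmintS : IntegrableOn (fun u => c u * m u) S :=
      aux_cm_int hab hx₀ hμcont hσcont hσpos hccont hcnn hcle hMint
        (aux_measurableSet_stInt hab) (le_refl _)
    have htM : Tendsto (Mab μ σ x₀ a) (atB b) (𝓝 Mb) :=
      aux_tendsto_full hab hx₀ hmnn hMfin hMint
    have htA : Tendsto (fun v => ∫ u in Ioo a v, c u * m u) (atB b) (𝓝 Cb) :=
      aux_tendsto_full hab hx₀
        (fun u hu => mul_nonneg (hcnn u hu) (hmnn u hu)) hcmint hcmintS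
    set L := Cb / Mb with hL
    have hLM : Cb - L * Mb = 0 := by
      rw [hL, div_mul_cancel₀ _ hMbpos.ne']; ring
    have hzero : Tendsto (fun v => (∫ u in Ioo a v, c u * m u) - L * Mab μ σ x₀ a v)
        (atB b) (𝓝 0) := by
      rw [← hLM]
      exact htA.sub (htM.const_mul L)
    have hev1 : ∀ᶠ v in atB b,
        |(∫ u in Ioo a v, c u * m u) - L * Mab μ σ x₀ a v| < ε * (Mb / 2) := by
      have := Metric.tendsto_nhds.1 hzero (ε * (Mb / 2)) (by positivity)
      filter_upwards [this] with v hv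
      rwa [Real.dist_eq, sub_zero] at hv
    have hev2 : ∀ᶠ v in atB b, Mb / 2 < Mab μ σ x₀ a v :=
      htM.eventually (eventually_gt_nhds (by linarith))
    filter_upwards [hev1, hev2, aux_atB_mem hab hx₀] with v h1 h2 h3
    refine ⟨h3.1, ?_⟩
    rw [hLdef]
    have : ε * (Mb / 2) ≤ ε * Mab μ σ x₀ a v := by nlinarith
    linarith [h1]
  · -- non-integrable case
    have hLdef : cbar μ σ c x₀ a b cb = cb := by rw [cbar, if_neg hMint]
    have hMtop := aux_M_atTop hab hx₀ hμcont hσcont hσpos hMfin hMint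
    have hcb' : ∀ᶠ v in atB b, |c v - cb| < ε / 2 := by
      have := Metric.tendsto_nhds.1 hcb (ε / 2) (by positivity)
      filter_upwards [this] with v hv
      rwa [Real.dist_eq] at hv
    obtain ⟨v₁, hv₁S, -, hv₁⟩ := aux_atB_extract hab hx₀ hcb'
    have hI' : ∀ x ∈ S, IntegrableOn (fun u => (c u - cb) * m u) (Ioo a x) := fun x hx => by
      have := (hcmint x hx).sub ((hMfin x hx).const_mul cb)
      convert this using 1; ext u; simp [sub_mul]
    set K := |∫ u in Ioo a v₁, (c u - cb) * m u| with hK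
    have hKnn : 0 ≤ K := abs_nonneg _
    filter_upwards [aux_atB_mem hab hv₁S, tendsto_atTop.1 hMtop (2 * K / ε),
      aux_atB_mem hab hx₀] with v hv hMv hv0
    refine ⟨hv0.1, ?_⟩
    rw [hLdef]
    have hvS : v ∈ S := hv.1
    have hv₁v : v₁ ≤ v := hv.2.le
    -- rewrite the difference as a single integral
    have hdiff : (∫ u in Ioo a v, c u * m u) - cb * Mab μ σ x₀ a v
        = ∫ u in Ioo a v, (c u - cb) * m u := by
      rw [Mab, ← hm, ← integral_const_mul]
      rw [← integral_sub (hcmint v hvS) ((hMfin v hvS).const_mul cb)]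
      congr 1
      ext u
      ring
    rw [hdiff, aux_split hI' hv₁S hvS hv₁v]
    -- bound the tail term
    have hsubS : Ioo v₁ v ⊆ S := fun u hu =>
      aux_Ioo_subset hvS ⟨lt_trans hv₁S.1 hu.1, hu.2⟩
    have hintm : IntegrableOn m (Ioo v₁ v) :=
      (hMfin v hvS).mono_set fun u hu => ⟨lt_trans hv₁S.1 hu.1, hu.2⟩
    have hint1 : IntegrableOn (fun u => (c u - cb) * m u) (Ioo v₁ v) :=
      (hI' v hvS).mono_set fun u hu => ⟨lt_trans hv₁S.1 hu.1, hu.2⟩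
    have htail : |∫ u in Ioo v₁ v, (c u - cb) * m u|
        ≤ ε / 2 * ∫ u in Ioo v₁ v, m u := by
      have habs : |∫ u in Ioo v₁ v, (c u - cb) * m u|
          ≤ ∫ u in Ioo v₁ v, |(c u - cb) * m u| := by
        simpa [Real.norm_eq_abs, abs_mul] using norm_integral_le_integral_norm
          (μ := volume.restrict (Ioo v₁ v)) (f := fun u => (c u - cb) * m u)
      calc |∫ u in Ioo v₁ v, (c u - cb) * m u| ≤ ∫ u in Ioo v₁ v, |(c u - cb) * m u| := habs
        _ ≤ ∫ u in Ioo v₁ v, ε / 2 * m u := by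
            apply setIntegral_mono_on hint1.abs (hintm.const_mul _) measurableSet_Ioo
            intro u hu
            have huS : u ∈ S := hsubS hu
            have h1 : |c u - cb| ≤ ε / 2 := (hv₁ u huS hu.1).le
            rw [abs_mul, abs_of_nonneg (hmnn u huS)]
            exact mul_le_mul_of_nonneg_right h1 (hmnn u huS)
        _ = ε / 2 * ∫ u in Ioo v₁ v, m u := integral_const_mul _ _
    -- the tail mass is bounded by the whole mass
    have hmass : ∫ u in Ioo v₁ v, m u ≤ Mab μ σ x₀ a v := by
      have := aux_split (h := m) hMfin hv₁S hvS hv₁v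
      have hpos := aux_M_pos hσpos hMfin hv₁S
      rw [Mab, ← hm]
      rw [Mab, ← hm] at hpos
      linarith [this ▸ le_refl (∫ u in Ioo a v, m u)]
    have hKle : K ≤ ε / 2 * Mab μ σ x₀ a v := by
      rcases le_or_gt K 0 with h | h
      · have := aux_M_pos hσpos hMfin hvS
        nlinarith
      · have h2 : 2 * K / ε ≤ Mab μ σ x₀ a v := hMv
        rw [div_le_iff₀ hε] at h2
        nlinarith
    have hmassnn : 0 ≤ ∫ u in Ioo v₁ v, m u :=
      setIntegral_nonneg measurableSet_Ioo fun u hu => hmnn u (hsubS hu)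
    calc |(∫ u in Ioo a v₁, (c u - cb) * m u) + ∫ u in Ioo v₁ v, (c u - cb) * m u|
        ≤ K + |∫ u in Ioo v₁ v, (c u - cb) * m u| := by
          rw [hK]; exact abs_add_le _ _
      _ ≤ ε / 2 * Mab μ σ x₀ a v + ε / 2 * (∫ u in Ioo v₁ v, m u) := by
          linarith [htail]
      _ ≤ ε * Mab μ σ x₀ a v := by nlinarith

theorem statement10    (a : ℝ) (b : EReal) (hab : (a : EReal) < b)
    (μ σ : ℝ → ℝ) (x₀ : ℝ) (hx₀ : x₀ ∈ stInt a b)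
    (hμcont : ContinuousOn μ (stInt a b)) (hσcont : ContinuousOn σ (stInt a b))
    (hσpos : ∀ x ∈ stInt a b, 0 < (σ x) ^ 2)
    (hMfin : ∀ x ∈ stInt a b, IntegrableOn (mDen μ σ x₀) (Set.Ioo a x))
    (hsa : Tendsto (sDen μ σ x₀) (𝓝[>] a) atTop)
    (hsMb : Tendsto (fun x => sDen μ σ x₀ x * Mab μ σ x₀ a x) (atB b) atTop)
    (hbnat : Tendsto (xiF μ σ x₀ a) (atB b) atTop)
    (c : ℝ → ℝ) (hccont : ContinuousOn c (stInt a b))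
    (hcnn : ∀ x ∈ stInt a b, 0 ≤ c x) (hcmono : MonotoneOn c (stInt a b))
    (ca cb : ℝ) (hca : Tendsto c (𝓝[>] a) (𝓝 ca)) (hcb : Tendsto c (atB b) (𝓝 cb))
    (hca0 : 0 ≤ ca) (hcacb : ca < cb)
    :
    Tendsto (fun y => gF μ σ c x₀ a y / xiF μ σ x₀ a y) (atB b)
      (𝓝 (cbar μ σ c x₀ a b cb)) ∧
    (∀ y₀ ∈ stInt a b,
      Tendsto (fun y => (gF μ σ c x₀ a y - gF μ σ c x₀ a y₀) /
          (xiF μ σ x₀ a y - xiF μ σ x₀ a y₀)) (atB b) (𝓝 (cbar μ σ c x₀ a b cb))) ∧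
    Tendsto (fun q : ℝ × ℝ =>
        (gF μ σ c x₀ a q.2 - gF μ σ c x₀ a q.1) / (xiF μ σ x₀ a q.2 - xiF μ σ x₀ a q.1))
      (((atB b) ×ˢ (atB b)) ⊓ 𝓟 {q : ℝ × ℝ | q.1 < q.2 ∧ (q.2 : EReal) < b})
      (𝓝 (cbar μ σ c x₀ a b cb)) := by
  have hOrd := aux_ordConnected_stInt hab
  set S := stInt a b with hSdef
  set L := cbar μ σ c x₀ a b cb with hLdef
  set m := mDen μ σ x₀ with hmdef
  set s := sDen μ σ x₀ with hsdef
  set ψ : ℝ → ℝ := fun v => Mab μ σ x₀ a v * s v with hψdef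
  set φ : ℝ → ℝ := fun v => (∫ u in Ioo a v, c u * m u) * s v with hφdef
  have hscont : ContinuousOn s S := aux_sDen_cont hab hμcont hσcont hσpos hx₀
  have hmcont : ContinuousOn m S := aux_mDen_cont hab hμcont hσcont hσpos hx₀
  have hcle := aux_c_le_cb hab hcmono hcb
  have hcmint : ∀ v ∈ S, IntegrableOn (fun u => c u * m u) (Ioo a v) := fun v hv =>
    aux_cm_int hab hx₀ hμcont hσcont hσpos hccont hcnn hcle (hMfin v hv)
      measurableSet_Ioo (aux_Ioo_subset hv)
  have hψcont : ContinuousOn ψ S :=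
    (aux_A_cont hab hmcont hMfin hx₀).mul hscont
  have hφcont : ContinuousOn φ S :=
    (aux_A_cont hab (hccont.mul hmcont) hcmint hx₀).mul hscont
  have hψpos : ∀ v ∈ S, 0 < ψ v := fun v hv =>
    mul_pos (aux_M_pos hσpos hMfin hv) aux_sDen_pos
  have hψii : ∀ w ∈ S, ∀ y ∈ S, IntervalIntegrable ψ volume w y := fun w hw y hy =>
    (hψcont.mono (hOrd.uIcc_subset hw hy)).intervalIntegrable
  have hφii : ∀ w ∈ S, ∀ y ∈ S, IntervalIntegrable φ volume w y := fun w hw y hy =>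
    (hφcont.mono (hOrd.uIcc_subset hw hy)).intervalIntegrable
  have hxidiff : ∀ w ∈ S, ∀ y ∈ S,
      xiF μ σ x₀ a y - xiF μ σ x₀ a w = ∫ v in w..y, ψ v := fun w hw y hy =>
    intervalIntegral.integral_interval_sub_left (hψii x₀ hx₀ y hy) (hψii x₀ hx₀ w hw)
  have hgdiff : ∀ w ∈ S, ∀ y ∈ S,
      gF μ σ c x₀ a y - gF μ σ c x₀ a w = ∫ v in w..y, φ v := fun w hw y hy =>
    intervalIntegral.integral_interval_sub_left (hφii x₀ hx₀ y hy) (hφii x₀ hx₀ w hw)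
  have hxile : ∀ w ∈ S, ∀ y ∈ S, w ≤ y → xiF μ σ x₀ a w ≤ xiF μ σ x₀ a y := by
    intro w hw y hy hwy
    have h0 : 0 ≤ ∫ v in w..y, ψ v :=
      intervalIntegral.integral_nonneg hwy fun v hv =>
        (hψpos v (hOrd.out hw hy ⟨hv.1, hv.2⟩)).le
    have := hxidiff w hw y hy
    linarith
  have hxipos : ∀ w ∈ S, ∀ y ∈ S, w < y → 0 < xiF μ σ x₀ a y - xiF μ σ x₀ a w := by
    intro w hw y hy hwy
    rw [hxidiff w hw y hy]
    exact intervalIntegral.intervalIntegral_pos_of_pos_on (hψii w hw y hy)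
      (fun v hv => hψpos v (hOrd.out hw hy ⟨hv.1.le, hv.2.le⟩)) hwy
  -- the key additive estimate
  have KEY : ∀ ε : ℝ, 0 < ε → ∀ z ∈ S, ∃ x₁ ∈ S, z ≤ x₁ ∧
      ∀ w, w ∈ S → ∀ y, y ∈ S → x₁ ≤ w → w ≤ y →
        |(gF μ σ c x₀ a y - gF μ σ c x₀ a w) - L * (xiF μ σ x₀ a y - xiF μ σ x₀ a w)|
          ≤ ε * (xiF μ σ x₀ a y - xiF μ σ x₀ a w) := by
    intro ε hε z hz
    obtain ⟨x₁', hx₁'S, hzx₁', hP⟩ := aux_atB_extract hab hz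
      (aux_keyE hab hx₀ hμcont hσcont hσpos hMfin hccont hcnn hcmono hcb hε)
    obtain ⟨x₁, hx₁S, hx₁gt⟩ := aux_exists_gt hab hx₁'S
    refine ⟨x₁, hx₁S, le_trans hzx₁' hx₁gt.le, ?_⟩
    intro w hw y hy hx₁w hwy
    have hIcc : Icc w y ⊆ S := hOrd.out hw hy
    have hpt : ∀ v ∈ Icc w y, |φ v - L * ψ v| ≤ ε * ψ v := by
      intro v hv
      have hvS : v ∈ S := hIcc hv
      have hvgt : x₁' < v := lt_of_lt_of_le hx₁gt (le_trans hx₁w hv.1)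
      obtain ⟨-, hbound⟩ := hP v hvS hvgt
      have hs0 : 0 < s v := aux_sDen_pos
      have : φ v - L * ψ v = ((∫ u in Ioo a v, c u * m u) - L * Mab μ σ x₀ a v) * s v := by
        rw [hφdef, hψdef]; ring
      rw [this, abs_mul, abs_of_nonneg hs0.le]
      calc |(∫ u in Ioo a v, c u * m u) - L * Mab μ σ x₀ a v| * s v
          ≤ (ε * Mab μ σ x₀ a v) * s v := mul_le_mul_of_nonneg_right hbound hs0.le
        _ = ε * ψ v := by rw [hψdef]; ring
    have hiiφψ : IntervalIntegrable (fun v => φ v - L * ψ v) volume w y :=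
      (hφii w hw y hy).sub ((hψii w hw y hy).const_mul L)
    calc |(gF μ σ c x₀ a y - gF μ σ c x₀ a w) - L * (xiF μ σ x₀ a y - xiF μ σ x₀ a w)|
        = |∫ v in w..y, (φ v - L * ψ v)| := by
          rw [hgdiff w hw y hy, hxidiff w hw y hy, intervalIntegral.integral_sub
            (hφii w hw y hy) ((hψii w hw y hy).const_mul L),
            intervalIntegral.integral_const_mul]
      _ ≤ ∫ v in w..y, |φ v - L * ψ v| :=
          intervalIntegral.abs_integral_le_integral_abs hwy
      _ ≤ ∫ v in w..y, ε * ψ v := by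
          apply intervalIntegral.integral_mono_on hwy hiiφψ.abs
            ((hψii w hw y hy).const_mul ε)
          exact hpt
      _ = ε * (xiF μ σ x₀ a y - xiF μ σ x₀ a w) := by
          rw [intervalIntegral.integral_const_mul, ← hxidiff w hw y hy]
  -- ratio version
  have KEY2 : ∀ ε : ℝ, 0 < ε → ∃ x₁ ∈ S, ∀ w, w ∈ S → ∀ y, y ∈ S → x₁ ≤ w → w < y →
      |(gF μ σ c x₀ a y - gF μ σ c x₀ a w) / (xiF μ σ x₀ a y - xiF μ σ x₀ a w) - L| ≤ ε := by
    intro ε hε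
    obtain ⟨x₁, hx₁S, -, hK⟩ := KEY ε hε x₀ hx₀
    refine ⟨x₁, hx₁S, fun w hw y hy hx₁w hwy => ?_⟩
    have hD := hxipos w hw y hy hwy
    have hnum := hK w hw y hy hx₁w hwy.le
    have heq : (gF μ σ c x₀ a y - gF μ σ c x₀ a w) / (xiF μ σ x₀ a y - xiF μ σ x₀ a w) - L
        = ((gF μ σ c x₀ a y - gF μ σ c x₀ a w) - L * (xiF μ σ x₀ a y - xiF μ σ x₀ a w)) /
          (xiF μ σ x₀ a y - xiF μ σ x₀ a w) := by
      field_simp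
    rw [heq, abs_div, abs_of_pos hD, div_le_iff₀ hD]
    exact hnum
  -- Part 2
  have part2 : ∀ y₀ ∈ S, Tendsto (fun y => (gF μ σ c x₀ a y - gF μ σ c x₀ a y₀) /
      (xiF μ σ x₀ a y - xiF μ σ x₀ a y₀)) (atB b) (𝓝 L) := by
    intro y₀ hy₀
    rw [Metric.tendsto_nhds]
    intro ε hε
    obtain ⟨x₁, hx₁S, hy₀x₁, hK⟩ := KEY (ε/4) (by linarith) y₀ hy₀
    set C := |(gF μ σ c x₀ a x₁ - gF μ σ c x₀ a y₀) -
      L * (xiF μ σ x₀ a x₁ - xiF μ σ x₀ a y₀)| with hC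
    have hCnn : 0 ≤ C := abs_nonneg _
    have hDinf : Tendsto (fun y => xiF μ σ x₀ a y - xiF μ σ x₀ a y₀) (atB b) atTop := by
      simp only [sub_eq_add_neg]
      exact tendsto_atTop_add_const_right _ _ hbnat
    filter_upwards [aux_atB_mem hab hx₁S,
        tendsto_atTop.1 hDinf (4 * C / ε + 1)] with y hy hDge
    have hyS : y ∈ S := hy.1
    have hx₁y : x₁ ≤ y := hy.2.le
    set D := xiF μ σ x₀ a y - xiF μ σ x₀ a y₀ with hDdef
    have hDpos : 0 < D := by
      have : 0 ≤ 4 * C / ε := by positivity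
      linarith
    have hnum : |(gF μ σ c x₀ a y - gF μ σ c x₀ a y₀) - L * D| ≤ ε / 4 * D + C := by
      have h1 := hK x₁ hx₁S y hyS le_rfl hx₁y
      have h2 : (gF μ σ c x₀ a y - gF μ σ c x₀ a y₀) - L * D
          = ((gF μ σ c x₀ a y - gF μ σ c x₀ a x₁) -
              L * (xiF μ σ x₀ a y - xiF μ σ x₀ a x₁)) +
            ((gF μ σ c x₀ a x₁ - gF μ σ c x₀ a y₀) -
              L * (xiF μ σ x₀ a x₁ - xiF μ σ x₀ a y₀)) := by
        rw [hDdef]; ring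
      have h3 : xiF μ σ x₀ a y - xiF μ σ x₀ a x₁ ≤ D := by
        have := hxile y₀ hy₀ x₁ hx₁S hy₀x₁
        rw [hDdef]; linarith
      have h4 : 0 ≤ xiF μ σ x₀ a y - xiF μ σ x₀ a x₁ := by
        have := hxile x₁ hx₁S y hyS hx₁y; linarith
      calc |(gF μ σ c x₀ a y - gF μ σ c x₀ a y₀) - L * D|
          ≤ |(gF μ σ c x₀ a y - gF μ σ c x₀ a x₁) -
              L * (xiF μ σ x₀ a y - xiF μ σ x₀ a x₁)| + C := by
            rw [h2, hC]; exact abs_add_le _ _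
        _ ≤ ε / 4 * (xiF μ σ x₀ a y - xiF μ σ x₀ a x₁) + C := by linarith
        _ ≤ ε / 4 * D + C := by nlinarith
    have hCD : C ≤ ε / 4 * D := by
      have h5 : 4 * C / ε ≤ D - 1 := by linarith
      rw [div_le_iff₀ hε] at h5
      nlinarith
    rw [Real.dist_eq]
    have heq : (gF μ σ c x₀ a y - gF μ σ c x₀ a y₀) / D - L
        = ((gF μ σ c x₀ a y - gF μ σ c x₀ a y₀) - L * D) / D := by
      field_simp
    rw [heq, abs_div, abs_of_pos hDpos, div_lt_iff₀ hDpos]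
    calc |(gF μ σ c x₀ a y - gF μ σ c x₀ a y₀) - L * D| ≤ ε / 4 * D + C := hnum
      _ ≤ ε / 2 * D := by linarith
      _ < ε * D := by nlinarith
  refine ⟨?_, part2, ?_⟩
  · -- Part 1
    have h2 := part2 x₀ hx₀
    have hg0 : gF μ σ c x₀ a x₀ = 0 := intervalIntegral.integral_same
    have hxi0 : xiF μ σ x₀ a x₀ = 0 := intervalIntegral.integral_same
    simpa only [hg0, hxi0, sub_zero] using h2
  · -- Part 3
    rw [Metric.tendsto_nhds]
    intro ε hε
    obtain ⟨x₁, hx₁S, hK⟩ := KEY2 (ε/2) (by linarith)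
    have hev := aux_atB_mem hab hx₁S
    rw [eventually_inf_principal]
    filter_upwards [(hev.prod_inl (atB b)).and (hev.prod_inr (atB b))] with q hq hqD
    obtain ⟨⟨hq1S, hq1gt⟩, ⟨hq2S, hq2gt⟩⟩ := hq
    have hwy : q.1 < q.2 := hqD.1
    have := hK q.1 hq1S q.2 hq2S hq1gt.le hwy
    rw [Real.dist_eq]
    calc |(gF μ σ c x₀ a q.2 - gF μ σ c x₀ a q.1) /
          (xiF μ σ x₀ a q.2 - xiF μ σ x₀ a q.1) - L| ≤ ε / 2 := this
      _ < ε := by linarith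
end
end

section
/- Suppose lim_{x→a⁺} s(x) = ∞, the right boundary b is natural (lim_{x→b} s(x)·M[a,x] = ∞ and ∫_{x₀}^{b} M[x₀,v] s(v) dv = ∞), the left boundary a is natural (∫_a^{x₀} M[a,v] s(v) dv = ∞), μ extends continuously to x = a with a finite value μ(a), and there exists a pair (w̃,ỹ) with a < w̃ < ỹ < b and F(w̃,ỹ) > γ c̄(b). Then there exists a pair (w*,y*) with a < w* < y* < b at which F attains its supremum over 𝓡, and every such maximizing pair satisfies the first-order conditions sup_{(w,y)∈𝓡} F(w,y) = F(w*,y*) = h(w*) = h(y*). -/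
open MeasureTheory Filter Set Topology
open scoped Classical

noncomputable section

section Aux
variable {a : ℝ} {b : EReal} {μ σ c : ℝ → ℝ} {x₀ : ℝ}

lemma stInt_isOpen : IsOpen (stInt a b) := by
  have h : stInt a b = Ioi a ∩ ((↑) : ℝ → EReal) ⁻¹' (Iio b) := rfl
  rw [h]
  exact isOpen_Ioi.inter (isOpen_Iio.preimage continuous_coe_real_ereal)

lemma stInt_mem_of_le {x z : ℝ} (hx : x ∈ stInt a b) (h1 : a < z) (h2 : z ≤ x) :
    z ∈ stInt a b :=
  ⟨h1, lt_of_le_of_lt (EReal.coe_le_coe_iff.2 h2) hx.2⟩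

lemma stInt_ordConn : OrdConnected (stInt a b) :=
  ⟨fun _ hx _ hy _ hz => stInt_mem_of_le hy (lt_of_lt_of_le hx.1 hz.1) hz.2⟩

lemma stInt_convex : Convex ℝ (stInt a b) := convex_iff_ordConnected.2 stInt_ordConn

lemma Ioo_subset_stInt {x : ℝ} (hx : x ∈ stInt a b) : Ioo a x ⊆ stInt a b :=
  fun _ hz => stInt_mem_of_le hx hz.1 hz.2.le

lemma Icc_subset_stInt {x y : ℝ} (hx : x ∈ stInt a b) (hy : y ∈ stInt a b) :
    Icc x y ⊆ stInt a b := stInt_ordConn.out hx hy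

lemma uIcc_subset_stInt {x y : ℝ} (hx : x ∈ stInt a b) (hy : y ∈ stInt a b) :
    uIcc x y ⊆ stInt a b := stInt_ordConn.uIcc_subset hx hy

lemma mem_stInt_between {x y z : ℝ} (hx : x ∈ stInt a b) (hy : y ∈ stInt a b)
    (h1 : x ≤ z) (h2 : z ≤ y) : z ∈ stInt a b :=
  Icc_subset_stInt hx hy ⟨h1, h2⟩

/-- extraction of a pointwise statement from an eventual one along `atB b`. -/
lemma atB_extract (hab : (a : EReal) < b) {P : ℝ → Prop} (hP : ∀ᶠ y in atB b, P y)
    {x : ℝ} (hx : x ∈ stInt a b) :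
    ∃ β, β ∈ stInt a b ∧ x < β ∧ ∀ y ∈ stInt a b, β ≤ y → P y := by
  by_cases hb : b = ⊤
  · rw [atB, if_pos hb] at hP
    obtain ⟨B, hB⟩ := eventually_atTop.1 hP
    refine ⟨max B (x + 1), ⟨?_, ?_⟩, ?_, fun y _ hy => hB y (le_trans (le_max_left _ _) hy)⟩
    · exact lt_of_lt_of_le (lt_trans hx.1 (lt_add_one x)) (le_max_right _ _)
    · rw [hb]; exact EReal.coe_lt_top _
    · exact lt_of_lt_of_le (lt_add_one x) (le_max_right _ _)
  · rw [atB, if_neg hb] at hP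
    have hbot : b ≠ ⊥ := fun h => by simp [h] at hab
    have hcoe : (b.toReal : EReal) = b := EReal.coe_toReal hb hbot
    have hxb : x < b.toReal := by
      rw [← EReal.coe_lt_coe_iff, hcoe]; exact hx.2
    obtain ⟨l, hl, hsub⟩ := mem_nhdsLT_iff_exists_Ioo_subset.1 hP
    set β := (max l x + b.toReal) / 2 with hβdef
    have hmax : max l x < b.toReal := max_lt hl hxb
    have h1 : max l x < β := by rw [hβdef]; linarith
    have h2 : β < b.toReal := by rw [hβdef]; linarith
    refine ⟨β, ⟨lt_of_le_of_lt (le_trans hx.1.le (le_max_right l x)) h1, ?_⟩,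
      lt_of_le_of_lt (le_max_right l x) h1, fun y hy hyβ => ?_⟩
    · rw [← hcoe, EReal.coe_lt_coe_iff]; exact h2
    · have hyb : y < b.toReal := by rw [← EReal.coe_lt_coe_iff, hcoe]; exact hy.2
      exact hsub ⟨lt_of_le_of_lt (le_max_left l x) (lt_of_lt_of_le h1 hyβ), hyb⟩

lemma atB_eventually_mem (hab : (a : EReal) < b) {u : ℝ} (hu : u ∈ stInt a b) :
    ∀ᶠ y in atB b, y ∈ stInt a b ∧ u ≤ y := by
  by_cases hb : b = ⊤
  · rw [atB, if_pos hb]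
    filter_upwards [eventually_ge_atTop u] with y hy
    exact ⟨⟨lt_of_lt_of_le hu.1 hy, by rw [hb]; exact EReal.coe_lt_top _⟩, hy⟩
  · rw [atB, if_neg hb]
    have hbot : b ≠ ⊥ := fun h => by simp [h] at hab
    have hcoe : (b.toReal : EReal) = b := EReal.coe_toReal hb hbot
    have hub : u < b.toReal := by rw [← EReal.coe_lt_coe_iff, hcoe]; exact hu.2
    refine mem_nhdsLT_iff_exists_Ioo_subset.2 ⟨u, hub, fun y hy => ?_⟩
    have : y < b.toReal := hy.2
    exact ⟨⟨lt_trans hu.1 hy.1, by rw [← hcoe, EReal.coe_lt_coe_iff]; exact this⟩, hy.1.le⟩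

/-- extraction from eventual statement along `𝓝[>] a`. -/
lemma nhdsGT_extract {P : ℝ → Prop} (hP : ∀ᶠ y in 𝓝[>] a, P y)
    {x : ℝ} (hx : x ∈ stInt a b) :
    ∃ α, α ∈ stInt a b ∧ α < x ∧ ∀ y ∈ Ioc a α, P y := by
  obtain ⟨u, hu, hsub⟩ := mem_nhdsGT_iff_exists_Ioo_subset.1 hP
  set α := (a + min u x) / 2 with hα
  have hmin : a < min u x := lt_min hu hx.1
  have h1 : a < α := by rw [hα]; linarith
  have h2 : α < min u x := by rw [hα]; linarith
  refine ⟨α, stInt_mem_of_le hx h1 (le_of_lt (lt_of_lt_of_le h2 (min_le_right u x))),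
    lt_of_lt_of_le h2 (min_le_right u x), fun y hy => hsub ⟨hy.1,
      lt_of_le_of_lt hy.2 (lt_of_lt_of_le h2 (min_le_left u x))⟩⟩

end Aux

structure Ctx (a : ℝ) (b : EReal) (μ σ : ℝ → ℝ) (x₀ : ℝ) : Prop where
  hab : (a : EReal) < b
  hx₀ : x₀ ∈ stInt a b
  hμc : ContinuousOn μ (stInt a b)
  hσc : ContinuousOn σ (stInt a b)
  hσp : ∀ x ∈ stInt a b, 0 < σ x ^ 2
  hMf : ∀ x ∈ stInt a b, IntegrableOn (mDen μ σ x₀) (Set.Ioo a x)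

namespace Ctx
variable {a : ℝ} {b : EReal} {μ σ : ℝ → ℝ} {x₀ : ℝ} (h : Ctx a b μ σ x₀)

lemma s_pos (x : ℝ) : 0 < sDen μ σ x₀ x := Real.exp_pos _

set_option linter.unusedSectionVars false

include h

lemma drift_cont : ContinuousOn (fun y => 2 * μ y / σ y ^ 2) (stInt a b) :=
  (continuousOn_const.mul h.hμc).div (h.hσc.pow 2) fun x hx => (h.hσp x hx).ne'

lemma s_hasDeriv {x : ℝ} (hx : x ∈ stInt a b) :
    HasDerivAt (sDen μ σ x₀) (-(2 * μ x / σ x ^ 2) * sDen μ σ x₀ x) x := by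
  have hint : IntervalIntegrable (fun y => 2 * μ y / σ y ^ 2) volume x₀ x :=
    (h.drift_cont.mono (uIcc_subset_stInt h.hx₀ hx)).intervalIntegrable
  have hmeas := h.drift_cont.stronglyMeasurableAtFilter (μ := volume) stInt_isOpen x hx
  have hcont : ContinuousAt (fun y => 2 * μ y / σ y ^ 2) x :=
    h.drift_cont.continuousAt (stInt_isOpen.mem_nhds hx)
  have hD := (intervalIntegral.integral_hasDerivAt_right hint hmeas hcont).neg.exp
  have hval : -(2 * μ x / σ x ^ 2) * sDen μ σ x₀ x =
      Real.exp (-(∫ y in x₀..x, 2 * μ y / σ y ^ 2)) * -(2 * μ x / σ x ^ 2) := by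
    simp only [sDen]; ring
  rw [hval]
  exact hD

lemma s_cont : ContinuousOn (sDen μ σ x₀) (stInt a b) :=
  fun x hx => ((h.s_hasDeriv hx).continuousAt).continuousWithinAt

lemma m_pos {x : ℝ} (hx : x ∈ stInt a b) : 0 < mDen μ σ x₀ x :=
  div_pos two_pos (mul_pos (h.hσp x hx) (s_pos x))

lemma m_cont : ContinuousOn (mDen μ σ x₀) (stInt a b) :=
  continuousOn_const.div ((h.hσc.pow 2).mul h.s_cont)
    fun x hx => (mul_pos (h.hσp x hx) (s_pos x)).ne'

/-- difference formula for integrals over `Ioo a ·`. -/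
lemma intA_diff {φ : ℝ → ℝ} (hφi : ∀ x ∈ stInt a b, IntegrableOn φ (Ioo a x))
    {x y : ℝ} (hx : x ∈ stInt a b) (hy : y ∈ stInt a b) (hxy : x ≤ y) :
    (∫ u in Ioo a y, φ u) - ∫ u in Ioo a x, φ u = ∫ u in x..y, φ u := by
  have hunion : Ioo a x ∪ Ico x y = Ioo a y := Set.Ioo_union_Ico_eq_Ioo hx.1 hxy
  have hdisj : Disjoint (Ioo a x) (Ico x y) :=
    Set.disjoint_left.2 fun u hu hu' => absurd hu.2 (not_lt.2 hu'.1)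
  have hi1 : IntegrableOn φ (Ioo a x) := hφi x hx
  have hi2 : IntegrableOn φ (Ico x y) :=
    (hφi y hy).mono_set fun u hu => ⟨lt_of_lt_of_le hx.1 hu.1, hu.2⟩
  have hu := MeasureTheory.setIntegral_union hdisj measurableSet_Ico hi1 hi2
  rw [hunion] at hu
  have h2 : ∫ u in Ico x y, φ u = ∫ u in x..y, φ u := by
    rw [intervalIntegral.integral_of_le hxy, MeasureTheory.integral_Ioc_eq_integral_Ioo,
      MeasureTheory.integral_Ico_eq_integral_Ioo]
  rw [hu, h2]
  ring

lemma intA_hasDeriv {φ : ℝ → ℝ} (hφi : ∀ x ∈ stInt a b, IntegrableOn φ (Ioo a x))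
    (hφc : ContinuousOn φ (stInt a b)) {x : ℝ} (hx : x ∈ stInt a b) :
    HasDerivAt (fun t => ∫ u in Ioo a t, φ u) (φ x) x := by
  set x₁ := (a + x) / 2 with hx₁def
  have hax : a < x := hx.1
  have hx₁x : x₁ < x := by rw [hx₁def]; linarith
  have hax₁ : a < x₁ := by rw [hx₁def]; linarith
  have hx₁ : x₁ ∈ stInt a b := stInt_mem_of_le hx hax₁ hx₁x.le
  have hev : (fun t => ∫ u in Ioo a t, φ u) =ᶠ[𝓝 x]
      (fun t => (∫ u in Ioo a x₁, φ u) + ∫ u in x₁..t, φ u) := by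
    have hop : IsOpen (stInt a b ∩ Ioi x₁) := stInt_isOpen.inter isOpen_Ioi
    filter_upwards [hop.mem_nhds ⟨hx, hx₁x⟩] with t ht
    have := h.intA_diff hφi hx₁ ht.1 (le_of_lt ht.2)
    linarith
  have hint : IntervalIntegrable φ volume x₁ x :=
    (hφc.mono (uIcc_subset_stInt hx₁ hx)).intervalIntegrable
  have hmeas := hφc.stronglyMeasurableAtFilter (μ := volume) stInt_isOpen x hx
  have hcont : ContinuousAt φ x := hφc.continuousAt (stInt_isOpen.mem_nhds hx)
  exact (((intervalIntegral.integral_hasDerivAt_right hint hmeas hcont).const_add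
    (∫ u in Ioo a x₁, φ u))).congr_of_eventuallyEq hev

lemma intA_nonneg {φ : ℝ → ℝ} (hφ : ∀ u ∈ stInt a b, 0 ≤ φ u) {x : ℝ} (hx : x ∈ stInt a b) :
    0 ≤ ∫ u in Ioo a x, φ u :=
  setIntegral_nonneg measurableSet_Ioo fun u hu => hφ u (Ioo_subset_stInt hx hu)

lemma M_hasDeriv {x : ℝ} (hx : x ∈ stInt a b) :
    HasDerivAt (Mab μ σ x₀ a) (mDen μ σ x₀ x) x :=
  h.intA_hasDeriv h.hMf h.m_cont hx

lemma M_cont : ContinuousOn (Mab μ σ x₀ a) (stInt a b) :=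
  fun x hx => (h.M_hasDeriv hx).continuousAt.continuousWithinAt

lemma M_diff {x y : ℝ} (hx : x ∈ stInt a b) (hy : y ∈ stInt a b) (hxy : x ≤ y) :
    Mab μ σ x₀ a y - Mab μ σ x₀ a x = ∫ u in x..y, mDen μ σ x₀ u :=
  h.intA_diff h.hMf hx hy hxy

lemma M_pos {x : ℝ} (hx : x ∈ stInt a b) : 0 < Mab μ σ x₀ a x := by
  set x₁ := (a + x) / 2 with hx₁def
  have hax : a < x := hx.1
  have hx₁x : x₁ < x := by rw [hx₁def]; linarith
  have hax₁ : a < x₁ := by rw [hx₁def]; linarith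
  have hx₁ : x₁ ∈ stInt a b := stInt_mem_of_le hx hax₁ hx₁x.le
  have h1 : 0 ≤ Mab μ σ x₀ a x₁ := h.intA_nonneg (fun u hu => (h.m_pos hu).le) hx₁
  have h2 : 0 < ∫ u in x₁..x, mDen μ σ x₀ u := by
    apply intervalIntegral.intervalIntegral_pos_of_pos_on
      ((h.m_cont.mono (uIcc_subset_stInt hx₁ hx)).intervalIntegrable)
      (fun u hu => h.m_pos (stInt_mem_of_le hx (lt_trans hax₁ hu.1) hu.2.le)) hx₁x
  have := h.M_diff hx₁ hx hx₁x.le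
  linarith

lemma M_mono {x y : ℝ} (hx : x ∈ stInt a b) (hy : y ∈ stInt a b) (hxy : x ≤ y) :
    Mab μ σ x₀ a x ≤ Mab μ σ x₀ a y := by
  have := h.M_diff hx hy hxy
  have h2 : 0 ≤ ∫ u in x..y, mDen μ σ x₀ u :=
    intervalIntegral.integral_nonneg hxy fun u hu =>
      (h.m_pos (mem_stInt_between hx hy hu.1 hu.2)).le
  linarith

end Ctx


def Ac (μ σ c : ℝ → ℝ) (x₀ a x : ℝ) : ℝ := ∫ u in Set.Ioo a x, c u * mDen μ σ x₀ u
def Amu (μ σ : ℝ → ℝ) (x₀ a x : ℝ) : ℝ := ∫ u in Set.Ioo a x, μ u * mDen μ σ x₀ u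

namespace Ctx
variable {a : ℝ} {b : EReal} {μ σ c : ℝ → ℝ} {x₀ μa : ℝ} (h : Ctx a b μ σ x₀)
set_option linter.unusedSectionVars false
include h

lemma bdd_mul_m_int {f : ℝ → ℝ} {B : ℝ} {x : ℝ} (hx : x ∈ stInt a b)
    (hfc : ContinuousOn f (stInt a b)) (hbd : ∀ u ∈ Ioo a x, |f u| ≤ B) :
    IntegrableOn (fun u => f u * mDen μ σ x₀ u) (Ioo a x) := by
  refine Integrable.mono' ((h.hMf x hx).const_mul B) ?_ ?_
  · exact ((hfc.mono (Ioo_subset_stInt hx)).mul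
      (h.m_cont.mono (Ioo_subset_stInt hx))).aestronglyMeasurable measurableSet_Ioo
  · refine (ae_restrict_iff' measurableSet_Ioo).2 (ae_of_all _ fun u hu => ?_)
    have hm := h.m_pos (Ioo_subset_stInt hx hu)
    have hb2 := hbd u hu
    have h0 : |f u * mDen μ σ x₀ u| = |f u| * mDen μ σ x₀ u := by
      rw [abs_mul, abs_of_pos hm]
    rw [Real.norm_eq_abs, h0]
    exact mul_le_mul_of_nonneg_right hb2 hm.le

lemma mum_int (hμa : Tendsto μ (𝓝[>] a) (𝓝 μa)) {x : ℝ} (hx : x ∈ stInt a b) :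
    IntegrableOn (fun u => μ u * mDen μ σ x₀ u) (Ioo a x) := by
  have hball : ∀ᶠ y in 𝓝[>] a, |μ y| ≤ |μa| + 1 := by
    filter_upwards [hμa (Metric.ball_mem_nhds μa one_pos)] with y hy
    have h1 : |μ y - μa| < 1 := by simpa [Real.dist_eq] using hy
    have h2 : |μ y| ≤ |μ y - μa| + |μa| := by
      calc |μ y| = |μ y - μa + μa| := by ring_nf
      _ ≤ |μ y - μa| + |μa| := abs_add_le _ _
    linarith
  obtain ⟨t, ht, htx, hbd⟩ := nhdsGT_extract hball hx
  have h1 : IntegrableOn (fun u => μ u * mDen μ σ x₀ u) (Ioo a t) :=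
    h.bdd_mul_m_int ht h.hμc fun u hu => hbd u ⟨hu.1, hu.2.le⟩
  have h2 : IntegrableOn (fun u => μ u * mDen μ σ x₀ u) (Ico t x) := by
    have hsub : Icc t x ⊆ stInt a b := Icc_subset_stInt ht hx
    exact (((h.hμc.mono hsub).mul (h.m_cont.mono hsub)).integrableOn_Icc).mono_set
      Ico_subset_Icc_self
  have hun : Ioo a t ∪ Ico t x = Ioo a x := Set.Ioo_union_Ico_eq_Ioo ht.1 htx.le
  rw [← hun]; exact h1.union h2

lemma Ac_hasDeriv (hcc : ContinuousOn c (stInt a b))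
    (hci : ∀ x ∈ stInt a b, IntegrableOn (fun u => c u * mDen μ σ x₀ u) (Ioo a x))
    {x : ℝ} (hx : x ∈ stInt a b) :
    HasDerivAt (Ac μ σ c x₀ a) (c x * mDen μ σ x₀ x) x :=
  h.intA_hasDeriv hci (hcc.mul h.m_cont) hx

lemma Ac_cont (hcc : ContinuousOn c (stInt a b))
    (hci : ∀ x ∈ stInt a b, IntegrableOn (fun u => c u * mDen μ σ x₀ u) (Ioo a x)) :
    ContinuousOn (Ac μ σ c x₀ a) (stInt a b) :=
  fun x hx => (h.Ac_hasDeriv hcc hci hx).continuousAt.continuousWithinAt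

lemma Amu_hasDeriv (hμa : Tendsto μ (𝓝[>] a) (𝓝 μa)) {x : ℝ} (hx : x ∈ stInt a b) :
    HasDerivAt (Amu μ σ x₀ a) (μ x * mDen μ σ x₀ x) x :=
  h.intA_hasDeriv (fun y hy => h.mum_int hμa hy) (h.hμc.mul h.m_cont) hx

lemma xi_intInt {x y : ℝ} (hx : x ∈ stInt a b) (hy : y ∈ stInt a b) :
    IntervalIntegrable (fun v => Mab μ σ x₀ a v * sDen μ σ x₀ v) volume x y :=
  ((h.M_cont.mul h.s_cont).mono (uIcc_subset_stInt hx hy)).intervalIntegrable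

lemma xi_hasDeriv {x : ℝ} (hx : x ∈ stInt a b) :
    HasDerivAt (xiF μ σ x₀ a) (Mab μ σ x₀ a x * sDen μ σ x₀ x) x := by
  have hint := h.xi_intInt h.hx₀ hx
  have hmeas := (h.M_cont.mul h.s_cont).stronglyMeasurableAtFilter (μ := volume) stInt_isOpen x hx
  have hcont := (h.M_cont.mul h.s_cont).continuousAt (stInt_isOpen.mem_nhds hx)
  exact intervalIntegral.integral_hasDerivAt_right hint hmeas hcont

lemma xi_cont : ContinuousOn (xiF μ σ x₀ a) (stInt a b) :=
  fun x hx => (h.xi_hasDeriv hx).continuousAt.continuousWithinAt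

lemma xi_diff {x y : ℝ} (hx : x ∈ stInt a b) (hy : y ∈ stInt a b) :
    xiF μ σ x₀ a y - xiF μ σ x₀ a x = ∫ v in x..y, Mab μ σ x₀ a v * sDen μ σ x₀ v := by
  have hadd := intervalIntegral.integral_add_adjacent_intervals
    (h.xi_intInt h.hx₀ hx) (h.xi_intInt hx hy)
  simp only [xiF]
  linarith

lemma xi_strictMono : StrictMonoOn (xiF μ σ x₀ a) (stInt a b) := by
  apply strictMonoOn_of_deriv_pos stInt_convex h.xi_cont
  intro x hx
  rw [stInt_isOpen.interior_eq] at hx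
  rw [(h.xi_hasDeriv hx).deriv]
  exact mul_pos (h.M_pos hx) (s_pos x)

lemma g_intInt (hcc : ContinuousOn c (stInt a b))
    (hci : ∀ x ∈ stInt a b, IntegrableOn (fun u => c u * mDen μ σ x₀ u) (Ioo a x))
    {x y : ℝ} (hx : x ∈ stInt a b) (hy : y ∈ stInt a b) :
    IntervalIntegrable (fun v => Ac μ σ c x₀ a v * sDen μ σ x₀ v) volume x y :=
  (((h.Ac_cont hcc hci).mul h.s_cont).mono (uIcc_subset_stInt hx hy)).intervalIntegrable

lemma g_hasDeriv (hcc : ContinuousOn c (stInt a b))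
    (hci : ∀ x ∈ stInt a b, IntegrableOn (fun u => c u * mDen μ σ x₀ u) (Ioo a x))
    {x : ℝ} (hx : x ∈ stInt a b) :
    HasDerivAt (gF μ σ c x₀ a) (Ac μ σ c x₀ a x * sDen μ σ x₀ x) x := by
  have hint := h.g_intInt hcc hci h.hx₀ hx
  have hmeas := ((h.Ac_cont hcc hci).mul h.s_cont).stronglyMeasurableAtFilter
    (μ := volume) stInt_isOpen x hx
  have hcont := ((h.Ac_cont hcc hci).mul h.s_cont).continuousAt (stInt_isOpen.mem_nhds hx)
  exact intervalIntegral.integral_hasDerivAt_right hint hmeas hcont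

lemma g_cont (hcc : ContinuousOn c (stInt a b))
    (hci : ∀ x ∈ stInt a b, IntegrableOn (fun u => c u * mDen μ σ x₀ u) (Ioo a x)) :
    ContinuousOn (gF μ σ c x₀ a) (stInt a b) :=
  fun x hx => (h.g_hasDeriv hcc hci hx).continuousAt.continuousWithinAt

lemma inv_s_hasDeriv {x : ℝ} (hx : x ∈ stInt a b) :
    HasDerivAt (fun t => (sDen μ σ x₀ t)⁻¹) (μ x * mDen μ σ x₀ x) x := by
  have hD := (h.s_hasDeriv hx).inv (s_pos x).ne'
  have heq : -(-(2 * μ x / σ x ^ 2) * sDen μ σ x₀ x) / sDen μ σ x₀ x ^ 2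
      = μ x * mDen μ σ x₀ x := by
    have h1 : σ x ^ 2 ≠ 0 := (h.hσp x hx).ne'
    have h2 : sDen μ σ x₀ x ≠ 0 := (s_pos x).ne'
    simp only [mDen]
    field_simp
  rw [heq] at hD; exact hD

lemma Amu_eq_inv_s (hμa : Tendsto μ (𝓝[>] a) (𝓝 μa))
    (hsa : Tendsto (sDen μ σ x₀) (𝓝[>] a) atTop)
    {x : ℝ} (hx : x ∈ stInt a b) : Amu μ σ x₀ a x = (sDen μ σ x₀ x)⁻¹ := by
  have hGd : ∀ t ∈ stInt a b,
      HasDerivAt (fun t => Amu μ σ x₀ a t - (sDen μ σ x₀ t)⁻¹) 0 t := by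
    intro t ht
    have hd := (h.Amu_hasDeriv hμa ht).sub (h.inv_s_hasDeriv ht)
    rw [sub_self] at hd; exact hd
  have hconst : ∀ t ∈ stInt a b, Amu μ σ x₀ a t - (sDen μ σ x₀ t)⁻¹
      = Amu μ σ x₀ a x - (sDen μ σ x₀ x)⁻¹ := by
    intro t ht
    have hder : ∀ u ∈ uIcc t x,
        HasDerivAt (fun t => Amu μ σ x₀ a t - (sDen μ σ x₀ t)⁻¹) ((fun _ => (0:ℝ)) u) u :=
      fun u hu => hGd u (uIcc_subset_stInt ht hx hu)
    have h0 := intervalIntegral.integral_eq_sub_of_hasDerivAt hder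
      (intervalIntegrable_const)
    simp only [intervalIntegral.integral_const, smul_zero] at h0
    linarith
  set tseq : ℕ → ℝ := fun n => a + (x - a) / (n + 1) with htseq
  have hax : a < x := hx.1
  have htmem : ∀ n : ℕ, tseq n ∈ Ioc a x := by
    intro n
    have hp : (0:ℝ) < (n:ℝ) + 1 := by positivity
    constructor
    · have : 0 < (x - a) / ((n:ℝ) + 1) := div_pos (by linarith) hp
      simp only [htseq]; linarith
    · simp only [htseq]
      have h1 : (x - a) / ((n:ℝ) + 1) ≤ (x - a) :=
        div_le_self (by linarith) (by simp)
      linarith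
  have htI : ∀ n, tseq n ∈ stInt a b := fun n => stInt_mem_of_le hx (htmem n).1 (htmem n).2
  have htend : Tendsto tseq atTop (𝓝 a) := by
    have h1 : Tendsto (fun n : ℕ => (x - a) / ((n:ℝ) + 1)) atTop (𝓝 0) := by
      simpa [mul_one_div, div_eq_mul_inv] using tendsto_one_div_add_atTop_nhds_zero_nat.const_mul (x - a)
    simpa using tendsto_const_nhds.add h1
  have htendW : Tendsto tseq atTop (𝓝[>] a) :=
    tendsto_nhdsWithin_of_tendsto_nhds_of_eventually_within _ htend
      (Eventually.of_forall fun n => (htmem n).1)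
  have hanti : ∀ m n : ℕ, m ≤ n → tseq n ≤ tseq m := by
    intro m n hmn
    simp only [htseq]
    have h1 : ((m:ℝ) + 1) ≤ ((n:ℝ) + 1) := by exact_mod_cast Nat.succ_le_succ hmn
    have h2 : (x - a) / ((n:ℝ) + 1) ≤ (x - a) / ((m:ℝ) + 1) :=
      div_le_div_of_nonneg_left (by linarith) (by positivity) h1
    linarith
  set S : ℕ → Set ℝ := fun n => Ioo (tseq n) x with hS
  have hmono : Monotone S := fun m n hmn u hu =>
    ⟨lt_of_le_of_lt (hanti m n hmn) hu.1, hu.2⟩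
  have hUnion : ⋃ n, S n = Ioo a x := by
    ext u
    simp only [hS, mem_iUnion, mem_Ioo]
    constructor
    · rintro ⟨n, h1, h2⟩; exact ⟨lt_trans (htmem n).1 h1, h2⟩
    · rintro ⟨h1, h2⟩
      obtain ⟨n, hn⟩ := ((tendsto_order.1 htend).2 u h1).exists
      exact ⟨n, hn, h2⟩
  have hfi : IntegrableOn (fun u => μ u * mDen μ σ x₀ u) (⋃ n, S n) := by
    rw [hUnion]; exact h.mum_int hμa hx
  have hset := MeasureTheory.tendsto_setIntegral_of_monotone
    (fun n => measurableSet_Ioo) hmono hfi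
  rw [hUnion] at hset
  have hAmu_seq : ∀ n, Amu μ σ x₀ a (tseq n)
      = Amu μ σ x₀ a x - ∫ u in S n, μ u * mDen μ σ x₀ u := by
    intro n
    have hd : Amu μ σ x₀ a x - Amu μ σ x₀ a (tseq n)
        = ∫ u in (tseq n)..x, μ u * mDen μ σ x₀ u :=
      h.intA_diff (fun y hy => h.mum_int hμa hy) (htI n) hx (htmem n).2
    have h2 : ∫ u in (tseq n)..x, μ u * mDen μ σ x₀ u
        = ∫ u in S n, μ u * mDen μ σ x₀ u := by
      rw [intervalIntegral.integral_of_le (htmem n).2,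
        MeasureTheory.integral_Ioc_eq_integral_Ioo]
    linarith
  have hlim1 : Tendsto (fun n => Amu μ σ x₀ a (tseq n)) atTop (𝓝 0) := by
    have h0 : (fun n => Amu μ σ x₀ a (tseq n))
        = fun n => Amu μ σ x₀ a x - ∫ u in S n, μ u * mDen μ σ x₀ u := funext hAmu_seq
    rw [h0]
    have h1 : Tendsto (fun n => Amu μ σ x₀ a x - ∫ u in S n, μ u * mDen μ σ x₀ u)
        atTop (𝓝 (Amu μ σ x₀ a x - Amu μ σ x₀ a x)) := tendsto_const_nhds.sub hset
    simpa using h1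
  have hlim2 : Tendsto (fun n => (sDen μ σ x₀ (tseq n))⁻¹) atTop (𝓝 0) :=
    (hsa.comp htendW).inv_tendsto_atTop
  have hlim : Tendsto (fun n => Amu μ σ x₀ a (tseq n) - (sDen μ σ x₀ (tseq n))⁻¹)
      atTop (𝓝 0) := by simpa using hlim1.sub hlim2
  have hconst2 : (fun n => Amu μ σ x₀ a (tseq n) - (sDen μ σ x₀ (tseq n))⁻¹)
      = fun _ => Amu μ σ x₀ a x - (sDen μ σ x₀ x)⁻¹ :=
    funext fun n => hconst (tseq n) (htI n)
  rw [hconst2] at hlim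
  have := tendsto_nhds_unique hlim tendsto_const_nhds
  linarith

end Ctx

namespace Ctx
variable {a : ℝ} {b : EReal} {μ σ c : ℝ → ℝ} {x₀ μa : ℝ} (h : Ctx a b μ σ x₀)
set_option linter.unusedSectionVars false
include h

/-- `μ(a+) = 0` under the standing assumptions. -/
lemma mua_zero (hμa : Tendsto μ (𝓝[>] a) (𝓝 μa))
    (hsa : Tendsto (sDen μ σ x₀) (𝓝[>] a) atTop)
    (hanat : Tendsto (xiF μ σ x₀ a) (𝓝[>] a) atBot) : μa = 0 := by
  by_contra hne
  rcases lt_or_gt_of_ne hne with hlt | hgt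
  · -- μa < 0 : then Amu < 0 near a, contradicting Amu = 1/s > 0
    have hev : ∀ᶠ y in 𝓝[>] a, μ y < μa / 2 := hμa (Iio_mem_nhds (by linarith))
    obtain ⟨t, ht, _, hbd⟩ := nhdsGT_extract hev h.hx₀
    have hle : Amu μ σ x₀ a t ≤ (μa / 2) * Mab μ σ x₀ a t := by
      have h1 : ∫ u in Ioo a t, μ u * mDen μ σ x₀ u
          ≤ ∫ u in Ioo a t, (μa / 2) * mDen μ σ x₀ u := by
        apply setIntegral_mono_on (h.mum_int hμa ht) ((h.hMf t ht).const_mul _)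
          measurableSet_Ioo
        intro u hu
        exact mul_le_mul_of_nonneg_right (hbd u ⟨hu.1, hu.2.le⟩).le
          (h.m_pos (Ioo_subset_stInt ht hu)).le
      calc Amu μ σ x₀ a t ≤ ∫ u in Ioo a t, (μa / 2) * mDen μ σ x₀ u := h1
      _ = (μa / 2) * Mab μ σ x₀ a t := by rw [MeasureTheory.integral_const_mul]; rfl
    have hpos : 0 < Amu μ σ x₀ a t := by
      rw [h.Amu_eq_inv_s hμa hsa ht]
      exact inv_pos.2 (s_pos t)
    have hMt := h.M_pos ht
    nlinarith
  · -- μa > 0 : then M·s is bounded near a, contradicting ξ → -∞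
    have hev : ∀ᶠ y in 𝓝[>] a, μa / 2 < μ y := hμa (Ioi_mem_nhds (by linarith))
    obtain ⟨t, ht, htx₀, hbd⟩ := nhdsGT_extract hev h.hx₀
    have hMs : ∀ x ∈ Ioc a t, Mab μ σ x₀ a x * sDen μ σ x₀ x ≤ 2 / μa := by
      intro x hx
      have hxI : x ∈ stInt a b := stInt_mem_of_le ht hx.1 hx.2
      have h1 : (μa / 2) * Mab μ σ x₀ a x ≤ Amu μ σ x₀ a x := by
        have : ∫ u in Ioo a x, (μa / 2) * mDen μ σ x₀ u
            ≤ ∫ u in Ioo a x, μ u * mDen μ σ x₀ u := by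
          apply setIntegral_mono_on ((h.hMf x hxI).const_mul _) (h.mum_int hμa hxI)
            measurableSet_Ioo
          intro u hu
          exact mul_le_mul_of_nonneg_right (hbd u ⟨hu.1, hu.2.le.trans hx.2⟩).le
            (h.m_pos (Ioo_subset_stInt hxI hu)).le
        calc (μa / 2) * Mab μ σ x₀ a x
            = ∫ u in Ioo a x, (μa / 2) * mDen μ σ x₀ u := by
              rw [MeasureTheory.integral_const_mul]; rfl
        _ ≤ Amu μ σ x₀ a x := this
      rw [h.Amu_eq_inv_s hμa hsa hxI] at h1
      have hs := s_pos (μ := μ) (σ := σ) (x₀ := x₀) x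
      have h2 : (μa / 2) * Mab μ σ x₀ a x * sDen μ σ x₀ x
          ≤ (sDen μ σ x₀ x)⁻¹ * sDen μ σ x₀ x :=
        mul_le_mul_of_nonneg_right h1 hs.le
      rw [inv_mul_cancel₀ hs.ne'] at h2
      rw [le_div_iff₀ hgt]
      nlinarith [h2]
    set t' := (a + t) / 2 with ht'def
    have hat : a < t := ht.1
    have ht'1 : a < t' := by rw [ht'def]; linarith
    have ht'2 : t' < t := by rw [ht'def]; linarith
    have ht' : t' ∈ stInt a b := stInt_mem_of_le ht ht'1 ht'2.le
    have hbound : ∀ w ∈ Ioo a t', xiF μ σ x₀ a t' - (2 / μa) * (t' - a) ≤ xiF μ σ x₀ a w := by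
      intro w hw
      have hwI : w ∈ stInt a b := stInt_mem_of_le ht' hw.1 hw.2.le
      have hd := h.xi_diff hwI ht'
      have hle : ∫ v in w..t', Mab μ σ x₀ a v * sDen μ σ x₀ v
          ≤ ∫ v in w..t', (fun _ => 2 / μa) v := by
        apply intervalIntegral.integral_mono_on hw.2.le (h.xi_intInt hwI ht')
          intervalIntegrable_const
        intro v hv
        exact hMs v ⟨lt_of_lt_of_le hw.1 hv.1, hv.2.trans ht'2.le⟩
      rw [intervalIntegral.integral_const, smul_eq_mul] at hle
      have h3 : (t' - w) * (2 / μa) ≤ (t' - a) * (2 / μa) := by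
        apply mul_le_mul_of_nonneg_right (by linarith [hw.1]) (by positivity)
      nlinarith
    have hbot : ∀ᶠ w in 𝓝[>] a, xiF μ σ x₀ a w ≤ xiF μ σ x₀ a t' - (2 / μa) * (t' - a) - 1 :=
      tendsto_atBot.1 hanat _
    have hmem : ∀ᶠ w in 𝓝[>] a, w ∈ Ioo a t' := Ioo_mem_nhdsGT_of_mem ⟨le_refl a, ht'1⟩
    obtain ⟨w, hw1, hw2⟩ := (hbot.and hmem).exists
    have := hbound w hw2
    linarith

end Ctx

namespace Ctx
variable {a : ℝ} {b : EReal} {μ σ c : ℝ → ℝ} {x₀ μa p γ ca cb : ℝ} (h : Ctx a b μ σ x₀)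
set_option linter.unusedSectionVars false
include h

lemma c_ge_ca (hcmono : MonotoneOn c (stInt a b)) (hca : Tendsto c (𝓝[>] a) (𝓝 ca))
    {u : ℝ} (hu : u ∈ stInt a b) : ca ≤ c u := by
  apply le_of_tendsto hca
  have hmem : ∀ᶠ y in 𝓝[>] a, y ∈ Ioo a u := Ioo_mem_nhdsGT_of_mem ⟨le_refl a, hu.1⟩
  filter_upwards [hmem] with y hy
  exact hcmono (stInt_mem_of_le hu hy.1 hy.2.le) hu hy.2.le

omit h in
lemma atB_neBot (hab : (a : EReal) < b) : (atB b).NeBot := by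
  by_cases hb : b = ⊤
  · rw [atB, if_pos hb]; infer_instance
  · rw [atB, if_neg hb]; infer_instance

lemma c_le_cb (hcmono : MonotoneOn c (stInt a b)) (hcb : Tendsto c (atB b) (𝓝 cb))
    {u : ℝ} (hu : u ∈ stInt a b) : c u ≤ cb := by
  haveI := atB_neBot (a := a) h.hab
  apply ge_of_tendsto hcb
  filter_upwards [atB_eventually_mem h.hab hu] with y hy
  exact hcmono hu hy.1 hy.2

lemma cm_int (hcc : ContinuousOn c (stInt a b)) (hcnn : ∀ x ∈ stInt a b, 0 ≤ c x)
    (hcmono : MonotoneOn c (stInt a b)) (hcb : Tendsto c (atB b) (𝓝 cb))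
    {x : ℝ} (hx : x ∈ stInt a b) :
    IntegrableOn (fun u => c u * mDen μ σ x₀ u) (Ioo a x) :=
  h.bdd_mul_m_int hx hcc fun u hu => by
    have h1 := hcnn u (Ioo_subset_stInt hx hu)
    have h2 := h.c_le_cb hcmono hcb (Ioo_subset_stInt hx hu)
    rwa [abs_of_nonneg h1]

lemma cm_int_stInt (hcc : ContinuousOn c (stInt a b)) (hcnn : ∀ x ∈ stInt a b, 0 ≤ c x)
    (hcmono : MonotoneOn c (stInt a b)) (hcb : Tendsto c (atB b) (𝓝 cb))
    (hMint : IntegrableOn (mDen μ σ x₀) (stInt a b)) :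
    IntegrableOn (fun u => c u * mDen μ σ x₀ u) (stInt a b) := by
  refine Integrable.mono' (hMint.const_mul cb)
    ((hcc.mul h.m_cont).aestronglyMeasurable stInt_isOpen.measurableSet) ?_
  refine (ae_restrict_iff' stInt_isOpen.measurableSet).2 (ae_of_all _ fun u hu => ?_)
  rw [Real.norm_eq_abs, abs_mul, abs_of_nonneg (hcnn u hu), abs_of_pos (h.m_pos hu)]
  exact mul_le_mul_of_nonneg_right (h.c_le_cb hcmono hcb hu) (h.m_pos hu).le

lemma seq_to_b : ∃ u : ℕ → ℝ, (∀ n, u n ∈ stInt a b) ∧ Monotone u ∧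
    ∀ z ∈ stInt a b, ∃ n, z < u n := by
  by_cases hb : b = ⊤
  · refine ⟨fun n => x₀ + n, fun n => ⟨?_, ?_⟩, fun m n hmn => by
      simpa using (Nat.cast_le (α := ℝ)).2 hmn, fun z _ => ?_⟩
    · show a < x₀ + (n:ℝ)
      have : (0:ℝ) ≤ n := Nat.cast_nonneg n
      linarith [h.hx₀.1]
    · show ((x₀ + (n:ℝ) : ℝ) : EReal) < b
      rw [hb]; exact EReal.coe_lt_top _
    · obtain ⟨n, hn⟩ := exists_nat_gt (z - x₀)
      refine ⟨n, ?_⟩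
      show z < x₀ + (n:ℝ)
      linarith
  · have hbot : b ≠ ⊥ := fun hbb => by
      have hab' := h.hab; rw [hbb] at hab'; exact absurd hab' (by simp)
    have hcoe : (b.toReal : EReal) = b := EReal.coe_toReal hb hbot
    set bR := b.toReal with hbR
    have hx₀b : x₀ < bR := by rw [← EReal.coe_lt_coe_iff, hcoe]; exact h.hx₀.2
    refine ⟨fun n => bR - (bR - x₀) / (n + 1), fun n => ⟨?_, ?_⟩, ?_, fun z hz => ?_⟩
    · show a < bR - (bR - x₀) / ((n:ℝ) + 1)
      have hp : (0:ℝ) < (n:ℝ) + 1 := by positivity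
      have h1 : (bR - x₀) / ((n:ℝ) + 1) ≤ bR - x₀ := div_le_self (by linarith) (by simp)
      linarith [h.hx₀.1]
    · show ((bR - (bR - x₀) / ((n:ℝ) + 1) : ℝ) : EReal) < b
      have hp : (0:ℝ) < (bR - x₀) / ((n:ℝ) + 1) := div_pos (by linarith) (by positivity)
      rw [← hcoe, EReal.coe_lt_coe_iff]
      linarith
    · intro m n hmn
      have h1 : ((m:ℝ) + 1) ≤ ((n:ℝ) + 1) := by exact_mod_cast Nat.succ_le_succ hmn
      have h2 : (bR - x₀) / ((n:ℝ) + 1) ≤ (bR - x₀) / ((m:ℝ) + 1) :=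
        div_le_div_of_nonneg_left (by linarith [h.hx₀.1, hx₀b]) (by positivity) h1
      show bR - (bR - x₀) / ((m:ℝ) + 1) ≤ bR - (bR - x₀) / ((n:ℝ) + 1)
      linarith
    · have hzb : z < bR := by rw [← EReal.coe_lt_coe_iff, hcoe]; exact hz.2
      have hd : 0 < bR - z := by linarith
      obtain ⟨n, hn⟩ := exists_nat_gt ((bR - x₀) / (bR - z))
      refine ⟨n, ?_⟩
      have h1 : (bR - x₀) / (bR - z) < (n:ℝ) + 1 := by
        have : (n:ℝ) ≤ (n:ℝ) + 1 := by linarith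
        linarith
      have h2 : bR - x₀ < ((n:ℝ) + 1) * (bR - z) := (div_lt_iff₀ hd).1 h1
      have hp : (0:ℝ) < (n:ℝ) + 1 := by positivity
      have h3 : (bR - x₀) / ((n:ℝ) + 1) < bR - z := by
        rw [div_lt_iff₀ hp]; linarith
      show z < bR - (bR - x₀) / ((n:ℝ) + 1)
      linarith

lemma M_sup (hMint : IntegrableOn (mDen μ σ x₀) (stInt a b)) {η : ℝ} (hη : 0 < η) :
    ∃ yη ∈ stInt a b, (∫ u in stInt a b, mDen μ σ x₀ u) - η < Mab μ σ x₀ a yη := by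
  obtain ⟨u, huI, humono, hub⟩ := h.seq_to_b
  have hS : Monotone (fun n => Ioo a (u n)) := fun m n hmn => Ioo_subset_Ioo_right (humono hmn)
  have hU : ⋃ n, Ioo a (u n) = stInt a b := by
    ext z; simp only [mem_iUnion, mem_Ioo]
    constructor
    · rintro ⟨n, h1, h2⟩; exact stInt_mem_of_le (huI n) h1 h2.le
    · intro hz; obtain ⟨n, hn⟩ := hub z hz; exact ⟨n, hz.1, hn⟩
  have hfi : IntegrableOn (mDen μ σ x₀) (⋃ n, Ioo a (u n)) := by rw [hU]; exact hMint
  have htend := MeasureTheory.tendsto_setIntegral_of_monotone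
    (fun n => measurableSet_Ioo) hS hfi
  rw [hU] at htend
  have hev : ∀ᶠ n in atTop,
      (∫ u in stInt a b, mDen μ σ x₀ u) - η < ∫ x in Ioo a (u n), mDen μ σ x₀ x :=
    (tendsto_order.1 htend).1 _ (by linarith)
  obtain ⟨n, hn⟩ := hev.exists
  exact ⟨u n, huI n, hn⟩

lemma M_le_T (hMint : IntegrableOn (mDen μ σ x₀) (stInt a b)) {x : ℝ} (hx : x ∈ stInt a b) :
    Mab μ σ x₀ a x ≤ ∫ u in stInt a b, mDen μ σ x₀ u := by
  apply setIntegral_mono_set hMint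
  · exact (ae_restrict_iff' stInt_isOpen.measurableSet).2
      (ae_of_all _ fun u hu => (h.m_pos hu).le)
  · exact HasSubset.Subset.eventuallyLE (Ioo_subset_stInt hx)

lemma Ac_le_C (hcc : ContinuousOn c (stInt a b)) (hcnn : ∀ x ∈ stInt a b, 0 ≤ c x)
    (hcmono : MonotoneOn c (stInt a b)) (hcb : Tendsto c (atB b) (𝓝 cb))
    (hMint : IntegrableOn (mDen μ σ x₀) (stInt a b)) {x : ℝ} (hx : x ∈ stInt a b) :
    Ac μ σ c x₀ a x ≤ ∫ u in stInt a b, c u * mDen μ σ x₀ u := by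
  apply setIntegral_mono_set (h.cm_int_stInt hcc hcnn hcmono hcb hMint)
  · exact (ae_restrict_iff' stInt_isOpen.measurableSet).2
      (ae_of_all _ fun u hu => mul_nonneg (hcnn u hu) (h.m_pos hu).le)
  · exact HasSubset.Subset.eventuallyLE (Ioo_subset_stInt hx)

lemma max_mem_stInt {x y : ℝ} (hx : x ∈ stInt a b) (hy : y ∈ stInt a b) :
    max x y ∈ stInt a b := by
  rcases le_total x y with hle | hle
  · rwa [max_eq_right hle]
  · rwa [max_eq_left hle]

end Ctx

namespace Ctx
variable {a : ℝ} {b : EReal} {μ σ c : ℝ → ℝ} {x₀ μa p γ ca cb : ℝ} (h : Ctx a b μ σ x₀)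
set_option linter.unusedSectionVars false
include h

lemma hF_eq (hμa : Tendsto μ (𝓝[>] a) (𝓝 μa))
    (hsa : Tendsto (sDen μ σ x₀) (𝓝[>] a) atTop)
    (hci : ∀ x ∈ stInt a b, IntegrableOn (fun u => c u * mDen μ σ x₀ u) (Ioo a x))
    {x : ℝ} (hx : x ∈ stInt a b) :
    hF μ σ c x₀ a p γ x = (p + γ * (Ac μ σ c x₀ a x * sDen μ σ x₀ x))
      / (Mab μ σ x₀ a x * sDen μ σ x₀ x) := by
  have hnum : (∫ u in Ioo a x, (γ * c u + p * μ u) * mDen μ σ x₀ u)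
      = γ * Ac μ σ c x₀ a x + p * Amu μ σ x₀ a x := by
    have h1 : ∫ u in Ioo a x, (γ * c u + p * μ u) * mDen μ σ x₀ u
        = ∫ u in Ioo a x, (γ * (c u * mDen μ σ x₀ u) + p * (μ u * mDen μ σ x₀ u)) :=
      integral_congr_ae (ae_of_all _ fun u => by ring)
    rw [h1, integral_add ((hci x hx).const_mul γ) ((h.mum_int hμa hx).const_mul p),
      MeasureTheory.integral_const_mul, MeasureTheory.integral_const_mul]
    rfl
  simp only [hF]
  rw [hnum, h.Amu_eq_inv_s hμa hsa hx]
  have hsx := s_pos (μ := μ) (σ := σ) (x₀ := x₀) x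
  have hM := h.M_pos hx
  field_simp
  ring

lemma tail_a (hca : Tendsto c (𝓝[>] a) (𝓝 ca)) (hμ0 : Tendsto μ (𝓝[>] a) (𝓝 0))
    (hsa : Tendsto (sDen μ σ x₀) (𝓝[>] a) atTop)
    (hci : ∀ x ∈ stInt a b, IntegrableOn (fun u => c u * mDen μ σ x₀ u) (Ioo a x))
    (hp : 0 < p) (hγ : 0 < γ) {r₀ : ℝ} (hr : γ * ca < r₀)
    {wt : ℝ} (hw : wt ∈ stInt a b) :
    ∃ α ∈ stInt a b, α < wt ∧ ∀ x ∈ stInt a b, x ≤ α →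
      p + γ * (Ac μ σ c x₀ a x * sDen μ σ x₀ x)
        ≤ r₀ * (Mab μ σ x₀ a x * sDen μ σ x₀ x) := by
  set ε := r₀ - γ * ca with hεdef
  have hε : 0 < ε := by rw [hεdef]; linarith
  have hev1 : ∀ᶠ y in 𝓝[>] a, c y < ca + ε / (3 * γ) := by
    apply hca (Iio_mem_nhds ?_)
    have h0 : 0 < ε / (3 * γ) := by positivity
    linarith
  have hev2 : ∀ᶠ y in 𝓝[>] a, |μ y| < ε / (3 * p) := by
    have h0 := hμ0 (Metric.ball_mem_nhds 0 (show (0:ℝ) < ε / (3 * p) by positivity))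
    filter_upwards [h0] with y hy
    simpa [Real.dist_eq] using hy
  obtain ⟨α, hα, hαw, hbd⟩ := nhdsGT_extract (hev1.and hev2) hw
  refine ⟨α, hα, hαw, fun x hxI hxα => ?_⟩
  have hsx := s_pos (μ := μ) (σ := σ) (x₀ := x₀) x
  have hM := h.M_pos hxI
  have hAc : Ac μ σ c x₀ a x ≤ (ca + ε / (3 * γ)) * Mab μ σ x₀ a x := by
    have h1 : ∫ u in Ioo a x, c u * mDen μ σ x₀ u
        ≤ ∫ u in Ioo a x, (ca + ε / (3 * γ)) * mDen μ σ x₀ u := by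
      apply setIntegral_mono_on (hci x hxI) ((h.hMf x hxI).const_mul _) measurableSet_Ioo
      intro u hu
      exact mul_le_mul_of_nonneg_right (hbd u ⟨hu.1, hu.2.le.trans hxα⟩).1.le
        (h.m_pos (Ioo_subset_stInt hxI hu)).le
    calc Ac μ σ c x₀ a x ≤ ∫ u in Ioo a x, (ca + ε / (3 * γ)) * mDen μ σ x₀ u := h1
    _ = (ca + ε / (3 * γ)) * Mab μ σ x₀ a x := by rw [MeasureTheory.integral_const_mul]; rfl
  have hAmu : Amu μ σ x₀ a x ≤ ε / (3 * p) * Mab μ σ x₀ a x := by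
    have h1 : ∫ u in Ioo a x, μ u * mDen μ σ x₀ u
        ≤ ∫ u in Ioo a x, ε / (3 * p) * mDen μ σ x₀ u := by
      apply setIntegral_mono_on (h.mum_int hμ0 hxI) ((h.hMf x hxI).const_mul _)
        measurableSet_Ioo
      intro u hu
      refine mul_le_mul_of_nonneg_right ?_ (h.m_pos (Ioo_subset_stInt hxI hu)).le
      exact le_trans (le_abs_self _) (hbd u ⟨hu.1, hu.2.le.trans hxα⟩).2.le
    calc Amu μ σ x₀ a x ≤ ∫ u in Ioo a x, ε / (3 * p) * mDen μ σ x₀ u := h1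
    _ = ε / (3 * p) * Mab μ σ x₀ a x := by rw [MeasureTheory.integral_const_mul]; rfl
  have hps : p * Amu μ σ x₀ a x * sDen μ σ x₀ x = p := by
    rw [h.Amu_eq_inv_s hμ0 hsa hxI]
    field_simp
  have hc1 : γ * (ca + ε / (3 * γ)) = γ * ca + ε / 3 := by field_simp
  have hc2 : p * (ε / (3 * p)) = ε / 3 := by field_simp
  -- p + γ Ac s ≤ (γ ca + 2ε/3) M s ≤ r₀ M s
  have hb1 : γ * (Ac μ σ c x₀ a x * sDen μ σ x₀ x)
      ≤ (γ * ca + ε / 3) * (Mab μ σ x₀ a x * sDen μ σ x₀ x) := by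
    have h1 : γ * Ac μ σ c x₀ a x ≤ (γ * ca + ε / 3) * Mab μ σ x₀ a x := by
      calc γ * Ac μ σ c x₀ a x ≤ γ * ((ca + ε / (3 * γ)) * Mab μ σ x₀ a x) :=
            mul_le_mul_of_nonneg_left hAc hγ.le
      _ = (γ * ca + ε / 3) * Mab μ σ x₀ a x := by rw [← mul_assoc, hc1]
    have h2 := mul_le_mul_of_nonneg_right h1 hsx.le
    linarith [h2]
  have hb2 : p ≤ ε / 3 * (Mab μ σ x₀ a x * sDen μ σ x₀ x) := by
    have h1 : p * Amu μ σ x₀ a x ≤ ε / 3 * Mab μ σ x₀ a x := by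
      calc p * Amu μ σ x₀ a x ≤ p * (ε / (3 * p) * Mab μ σ x₀ a x) :=
            mul_le_mul_of_nonneg_left hAmu hp.le
      _ = ε / 3 * Mab μ σ x₀ a x := by rw [← mul_assoc, hc2]
    have h2 := mul_le_mul_of_nonneg_right h1 hsx.le
    linarith [h2, hps]
  have hMs : 0 < Mab μ σ x₀ a x * sDen μ σ x₀ x := mul_pos hM hsx
  have hfin : (γ * ca + 2 * (ε / 3)) * (Mab μ σ x₀ a x * sDen μ σ x₀ x)
      ≤ r₀ * (Mab μ σ x₀ a x * sDen μ σ x₀ x) := by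
    apply mul_le_mul_of_nonneg_right _ hMs.le
    rw [hεdef]; linarith
  linarith [hb1, hb2, hfin]

lemma tail_b (hcc : ContinuousOn c (stInt a b)) (hcnn : ∀ x ∈ stInt a b, 0 ≤ c x)
    (hcmono : MonotoneOn c (stInt a b)) (hcb : Tendsto c (atB b) (𝓝 cb))
    (hsMb : Tendsto (fun x => sDen μ σ x₀ x * Mab μ σ x₀ a x) (atB b) atTop)
    (hp : 0 < p) (hγ : 0 < γ) {r₀ : ℝ} (hr : γ * cbar μ σ c x₀ a b cb < r₀)
    {yt : ℝ} (hy : yt ∈ stInt a b) :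
    ∃ β ∈ stInt a b, yt < β ∧ ∀ y ∈ stInt a b, β ≤ y →
      p + γ * (Ac μ σ c x₀ a y * sDen μ σ x₀ y)
        ≤ r₀ * (Mab μ σ x₀ a y * sDen μ σ x₀ y) := by
  by_cases hMint : IntegrableOn (mDen μ σ x₀) (stInt a b)
  · -- M[a,b] < ∞
    rw [cbar, if_pos hMint] at hr
    obtain ⟨T, hTdef⟩ : ∃ T, T = ∫ u in stInt a b, mDen μ σ x₀ u := ⟨_, rfl⟩
    obtain ⟨C, hCdef⟩ : ∃ C, C = ∫ u in stInt a b, c u * mDen μ σ x₀ u := ⟨_, rfl⟩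
    rw [← hTdef, ← hCdef] at hr
    have hT : 0 < T := by
      rw [hTdef]
      exact lt_of_lt_of_le (h.M_pos h.hx₀) (h.M_le_T hMint h.hx₀)
    have hC0 : 0 ≤ C := by
      rw [hCdef]
      exact setIntegral_nonneg stInt_isOpen.measurableSet
        (fun u hu => mul_nonneg (hcnn u hu) (h.m_pos hu).le)
    obtain ⟨D, hDdef⟩ : ∃ D, D = r₀ * T - γ * C := ⟨_, rfl⟩
    have hD : 0 < D := by
      rw [hDdef]
      have := (div_lt_iff₀ hT).1 (by rw [← mul_div_assoc] at hr; exact hr)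
      linarith
    obtain ⟨η, hηdef⟩ : ∃ η, η = min (T / 2) (D * T / (4 * (γ * C + 1))) := ⟨_, rfl⟩
    have hη : 0 < η := by
      rw [hηdef]
      exact lt_min (by linarith) (by positivity)
    obtain ⟨yη, hyη, hMyη⟩ := h.M_sup hMint hη
    rw [← hTdef] at hMyη
    have hev : ∀ᶠ y in atB b, 4 * p * T / D ≤ sDen μ σ x₀ y * Mab μ σ x₀ a y :=
      hsMb.eventually_ge_atTop _
    obtain ⟨β₀, hβ₀, hβ₀y, hP⟩ := atB_extract h.hab hev hy
    refine ⟨max β₀ yη, h.max_mem_stInt hβ₀ hyη, lt_of_lt_of_le hβ₀y (le_max_left _ _),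
      fun y hyI hge => ?_⟩
    have hsx := s_pos (μ := μ) (σ := σ) (x₀ := x₀) y
    have hM := h.M_pos hyI
    have hMle : Mab μ σ x₀ a y ≤ T := by rw [hTdef]; exact h.M_le_T hMint hyI
    have hMgt : T - η < Mab μ σ x₀ a y :=
      lt_of_lt_of_le hMyη (h.M_mono hyη hyI (le_trans (le_max_right _ _) hge))
    have hsM : 4 * p * T / D ≤ sDen μ σ x₀ y * Mab μ σ x₀ a y :=
      hP y hyI (le_trans (le_max_left _ _) hge)
    have hAc : Ac μ σ c x₀ a y ≤ C := by
      rw [hCdef]; exact h.Ac_le_C hcc hcnn hcmono hcb hMint hyI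
    have hMhalf : T / 2 ≤ Mab μ σ x₀ a y := by
      have : η ≤ T / 2 := by rw [hηdef]; exact min_le_left _ _
      linarith
    have e2 : p * T ≤ D * T / 4 * sDen μ σ x₀ y := by
      have h1 : 4 * p * T ≤ sDen μ σ x₀ y * Mab μ σ x₀ a y * D := (div_le_iff₀ hD).1 hsM
      have h2 : sDen μ σ x₀ y * Mab μ σ x₀ a y * D ≤ sDen μ σ x₀ y * T * D := by
        have := mul_le_mul_of_nonneg_left hMle hsx.le
        nlinarith [hD]
      nlinarith [h1, h2]
    have e5 : γ * C * η ≤ D * T / 4 := by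
      have h1 : η ≤ D * T / (4 * (γ * C + 1)) := by rw [hηdef]; exact min_le_right _ _
      have h2 : 0 ≤ γ * C := by positivity
      have h3 : γ * C * η ≤ γ * C * (D * T / (4 * (γ * C + 1))) :=
        mul_le_mul_of_nonneg_left h1 h2
      have h4 : γ * C * (D * T / (4 * (γ * C + 1))) ≤ D * T / 4 := by
        rw [mul_div_assoc', div_le_div_iff₀ (by positivity) (by norm_num)]
        nlinarith [mul_pos hD hT, h2]
      linarith
    have e1 : γ * Ac μ σ c x₀ a y * (sDen μ σ x₀ y * T)
        ≤ γ * C * (sDen μ σ x₀ y * T) :=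
      mul_le_mul_of_nonneg_right (mul_le_mul_of_nonneg_left hAc hγ.le)
        (mul_nonneg hsx.le hT.le)
    have e3 := mul_le_mul_of_nonneg_left hMgt.le
      (mul_nonneg (mul_nonneg hγ.le hC0) hsx.le)
    have e4 := mul_le_mul_of_nonneg_left hMhalf
      (mul_nonneg (mul_nonneg hD.le hT.le) hsx.le)
    have e5s : γ * C * η * sDen μ σ x₀ y ≤ D * T / 4 * sDen μ σ x₀ y :=
      mul_le_mul_of_nonneg_right e5 hsx.le
    have hgoalT : (p + γ * (Ac μ σ c x₀ a y * sDen μ σ x₀ y)) * T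
        ≤ r₀ * (Mab μ σ x₀ a y * sDen μ σ x₀ y) * T := by
      have e6 : r₀ * (Mab μ σ x₀ a y * sDen μ σ x₀ y) * T
          = (γ * C + D) * (Mab μ σ x₀ a y * sDen μ σ x₀ y) := by
        rw [hDdef]; ring
      rw [e6]
      nlinarith [e1, e2, e3, e4, e5s]
    exact (mul_le_mul_iff_left₀ hT).1 hgoalT
  · -- M[a,b] = ∞
    rw [cbar, if_neg hMint] at hr
    have hrc : 0 < r₀ - γ * cb := by linarith
    have hev : ∀ᶠ y in atB b, p / (r₀ - γ * cb) ≤ sDen μ σ x₀ y * Mab μ σ x₀ a y :=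
      hsMb.eventually_ge_atTop _
    obtain ⟨β, hβ, hβy, hP⟩ := atB_extract h.hab hev hy
    refine ⟨β, hβ, hβy, fun y hyI hge => ?_⟩
    have hsx := s_pos (μ := μ) (σ := σ) (x₀ := x₀) y
    have hM := h.M_pos hyI
    have h1 : Ac μ σ c x₀ a y ≤ cb * Mab μ σ x₀ a y := by
      have h2 : ∫ u in Ioo a y, c u * mDen μ σ x₀ u
          ≤ ∫ u in Ioo a y, cb * mDen μ σ x₀ u := by
        apply setIntegral_mono_on (h.cm_int hcc hcnn hcmono hcb hyI)
          ((h.hMf y hyI).const_mul cb) measurableSet_Ioo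
        intro u hu
        exact mul_le_mul_of_nonneg_right (h.c_le_cb hcmono hcb (Ioo_subset_stInt hyI hu))
          (h.m_pos (Ioo_subset_stInt hyI hu)).le
      calc Ac μ σ c x₀ a y ≤ ∫ u in Ioo a y, cb * mDen μ σ x₀ u := h2
      _ = cb * Mab μ σ x₀ a y := by rw [MeasureTheory.integral_const_mul]; rfl
    have h2 := hP y hyI hge
    have h3 : p ≤ sDen μ σ x₀ y * Mab μ σ x₀ a y * (r₀ - γ * cb) := (div_le_iff₀ hrc).1 h2
    have h4 := mul_le_mul_of_nonneg_left (mul_le_mul_of_nonneg_right h1 hsx.le) hγ.le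
    nlinarith [h3, h4]

end Ctx

namespace Ctx
variable {a : ℝ} {b : EReal} {μ σ c : ℝ → ℝ} {x₀ μa p γ ca cb : ℝ} (h : Ctx a b μ σ x₀)
set_option linter.unusedSectionVars false
include h

lemma g_diff (hcc : ContinuousOn c (stInt a b))
    (hci : ∀ x ∈ stInt a b, IntegrableOn (fun u => c u * mDen μ σ x₀ u) (Ioo a x))
    {x y : ℝ} (hx : x ∈ stInt a b) (hy : y ∈ stInt a b) :
    gF μ σ c x₀ a y - gF μ σ c x₀ a x = ∫ v in x..y, Ac μ σ c x₀ a v * sDen μ σ x₀ v := by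
  have hadd := intervalIntegral.integral_add_adjacent_intervals
    (h.g_intInt hcc hci h.hx₀ hx) (h.g_intInt hcc hci hx hy)
  have e1 : gF μ σ c x₀ a y = ∫ v in x₀..y, Ac μ σ c x₀ a v * sDen μ σ x₀ v := rfl
  have e2 : gF μ σ c x₀ a x = ∫ v in x₀..x, Ac μ σ c x₀ a v * sDen μ σ x₀ v := rfl
  rw [e1, e2]
  linarith

lemma cbar_ge (hcc : ContinuousOn c (stInt a b)) (hcnn : ∀ x ∈ stInt a b, 0 ≤ c x)
    (hcmono : MonotoneOn c (stInt a b)) (hca : Tendsto c (𝓝[>] a) (𝓝 ca))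
    (hcb : Tendsto c (atB b) (𝓝 cb)) (hcacb : ca < cb) :
    ca ≤ cbar μ σ c x₀ a b cb := by
  by_cases hMint : IntegrableOn (mDen μ σ x₀) (stInt a b)
  · rw [cbar, if_pos hMint]
    have hT : 0 < ∫ u in stInt a b, mDen μ σ x₀ u :=
      lt_of_lt_of_le (h.M_pos h.hx₀) (h.M_le_T hMint h.hx₀)
    rw [le_div_iff₀ hT]
    have h1 : ∫ u in stInt a b, ca * mDen μ σ x₀ u
        ≤ ∫ u in stInt a b, c u * mDen μ σ x₀ u := by
      apply setIntegral_mono_on (hMint.const_mul ca)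
        (h.cm_int_stInt hcc hcnn hcmono hcb hMint) stInt_isOpen.measurableSet
      intro u hu
      exact mul_le_mul_of_nonneg_right (h.c_ge_ca hcmono hca hu) (h.m_pos hu).le
    rw [MeasureTheory.integral_const_mul] at h1
    linarith
  · rw [cbar, if_neg hMint]
    exact hcacb.le

lemma Phi_hasDeriv (hcc : ContinuousOn c (stInt a b))
    (hci : ∀ x ∈ stInt a b, IntegrableOn (fun u => c u * mDen μ σ x₀ u) (Ioo a x))
    (r : ℝ) {x : ℝ} (hx : x ∈ stInt a b) :
    HasDerivAt (fun x => p * x + γ * gF μ σ c x₀ a x - r * xiF μ σ x₀ a x)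
      (p + γ * (Ac μ σ c x₀ a x * sDen μ σ x₀ x)
        - r * (Mab μ σ x₀ a x * sDen μ σ x₀ x)) x := by
  have h1 := (h.g_hasDeriv hcc hci hx).const_mul γ
  have h2 := (h.xi_hasDeriv hx).const_mul r
  have h3 : HasDerivAt (fun x : ℝ => p * x) p x := by
    simpa using (hasDerivAt_id x).const_mul p
  exact (h3.add h1).sub h2

lemma Phi_anti_Iic (hcc : ContinuousOn c (stInt a b))
    (hci : ∀ x ∈ stInt a b, IntegrableOn (fun u => c u * mDen μ σ x₀ u) (Ioo a x))
    {r α : ℝ}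
    (hbd : ∀ x ∈ stInt a b, x ≤ α →
      p + γ * (Ac μ σ c x₀ a x * sDen μ σ x₀ x) ≤ r * (Mab μ σ x₀ a x * sDen μ σ x₀ x)) :
    AntitoneOn (fun x => p * x + γ * gF μ σ c x₀ a x - r * xiF μ σ x₀ a x)
      (stInt a b ∩ Iic α) := by
  apply antitoneOn_of_deriv_nonpos (stInt_convex.inter (convex_Iic α))
  · exact fun x hx => ((h.Phi_hasDeriv hcc hci r hx.1).continuousAt).continuousWithinAt
  · intro x hx
    rw [interior_inter, stInt_isOpen.interior_eq, interior_Iic] at hx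
    exact ((h.Phi_hasDeriv hcc hci r hx.1).differentiableAt).differentiableWithinAt
  · intro x hx
    rw [interior_inter, stInt_isOpen.interior_eq, interior_Iic] at hx
    rw [(h.Phi_hasDeriv hcc hci r hx.1).deriv]
    have := hbd x hx.1 hx.2.le
    linarith

lemma Phi_anti_Ici (hcc : ContinuousOn c (stInt a b))
    (hci : ∀ x ∈ stInt a b, IntegrableOn (fun u => c u * mDen μ σ x₀ u) (Ioo a x))
    {r β : ℝ}
    (hbd : ∀ x ∈ stInt a b, β ≤ x →
      p + γ * (Ac μ σ c x₀ a x * sDen μ σ x₀ x) ≤ r * (Mab μ σ x₀ a x * sDen μ σ x₀ x)) :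
    AntitoneOn (fun x => p * x + γ * gF μ σ c x₀ a x - r * xiF μ σ x₀ a x)
      (stInt a b ∩ Ici β) := by
  apply antitoneOn_of_deriv_nonpos (stInt_convex.inter (convex_Ici β))
  · exact fun x hx => ((h.Phi_hasDeriv hcc hci r hx.1).continuousAt).continuousWithinAt
  · intro x hx
    rw [interior_inter, stInt_isOpen.interior_eq, interior_Ici] at hx
    exact ((h.Phi_hasDeriv hcc hci r hx.1).differentiableAt).differentiableWithinAt
  · intro x hx
    rw [interior_inter, stInt_isOpen.interior_eq, interior_Ici] at hx
    rw [(h.Phi_hasDeriv hcc hci r hx.1).deriv]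
    have := hbd x hx.1 hx.2.le
    linarith

lemma Ac_nonneg (hcnn : ∀ x ∈ stInt a b, 0 ≤ c x) {x : ℝ} (hx : x ∈ stInt a b) :
    0 ≤ Ac μ σ c x₀ a x :=
  h.intA_nonneg (fun u hu => mul_nonneg (hcnn u hu) (h.m_pos hu).le) hx

end Ctx

namespace Ctx
variable {a : ℝ} {b : EReal} {μ σ c : ℝ → ℝ} {x₀ μa p K γ : ℝ} (h : Ctx a b μ σ x₀)
set_option linter.unusedSectionVars false
include h

lemma foc (hcc : ContinuousOn c (stInt a b))
    (hci : ∀ x ∈ stInt a b, IntegrableOn (fun u => c u * mDen μ σ x₀ u) (Ioo a x))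
    (hμa : Tendsto μ (𝓝[>] a) (𝓝 μa))
    (hsa : Tendsto (sDen μ σ x₀) (𝓝[>] a) atTop)
    {w' y' : ℝ} (hw'I : w' ∈ stInt a b) (hy'I : y' ∈ stInt a b) (hlt : w' < y')
    (hmax : ∀ w y : ℝ, w ∈ stInt a b → y ∈ stInt a b → w < y →
      FF μ σ c x₀ a p K γ w y ≤ FF μ σ c x₀ a p K γ w' y') :
    FF μ σ c x₀ a p K γ w' y' = hF μ σ c x₀ a p γ w' ∧
      FF μ σ c x₀ a p K γ w' y' = hF μ σ c x₀ a p γ y' := by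
  have hΔξ : 0 < xiF μ σ x₀ a y' - xiF μ σ x₀ a w' :=
    sub_pos.2 (h.xi_strictMono hw'I hy'I hlt)
  constructor
  · -- w-direction
    have hopen : IsOpen (stInt a b ∩ Iio y') := stInt_isOpen.inter isOpen_Iio
    have hloc : IsLocalMax (fun w => FF μ σ c x₀ a p K γ w y') w' := by
      filter_upwards [hopen.mem_nhds ⟨hw'I, hlt⟩] with w hw
      exact hmax w y' hw.1 hy'I hw.2
    have hnum : HasDerivAt
        (fun w => p * (y' - w) - K + γ * (gF μ σ c x₀ a y' - gF μ σ c x₀ a w))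
        (-(p + γ * (Ac μ σ c x₀ a w' * sDen μ σ x₀ w'))) w' := by
      have h1 : HasDerivAt (fun w : ℝ => p * (y' - w)) (-p) w' := by
        simpa using ((hasDerivAt_id w').const_sub y').const_mul p
      have h2 := ((h.g_hasDeriv hcc hci hw'I).const_sub (gF μ σ c x₀ a y')).const_mul γ
      have h3 := (h1.sub_const K).add h2
      exact h3.congr_deriv (by ring)
    have hden : HasDerivAt (fun w => xiF μ σ x₀ a y' - xiF μ σ x₀ a w)
        (-(Mab μ σ x₀ a w' * sDen μ σ x₀ w')) w' :=
      (h.xi_hasDeriv hw'I).const_sub (xiF μ σ x₀ a y')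
    have hFd := hnum.div hden hΔξ.ne'
    have hz := hloc.hasDerivAt_eq_zero hFd
    rcases div_eq_zero_iff.1 hz with h0 | h0
    swap
    · exact absurd h0 (pow_ne_zero 2 hΔξ.ne')
    have hMs : 0 < Mab μ σ x₀ a w' * sDen μ σ x₀ w' :=
      mul_pos (h.M_pos hw'I) (s_pos w')
    rw [h.hF_eq hμa hsa hci hw'I]
    simp only [FF]
    rw [div_eq_div_iff hΔξ.ne' hMs.ne']
    nlinarith [h0]
  · -- y-direction
    have hopen : IsOpen (stInt a b ∩ Ioi w') := stInt_isOpen.inter isOpen_Ioi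
    have hloc : IsLocalMax (fun y => FF μ σ c x₀ a p K γ w' y) y' := by
      filter_upwards [hopen.mem_nhds ⟨hy'I, hlt⟩] with y hy
      exact hmax w' y hw'I hy.1 hy.2
    have hnum : HasDerivAt
        (fun y => p * (y - w') - K + γ * (gF μ σ c x₀ a y - gF μ σ c x₀ a w'))
        (p + γ * (Ac μ σ c x₀ a y' * sDen μ σ x₀ y')) y' := by
      have h1 : HasDerivAt (fun y : ℝ => p * (y - w')) p y' := by
        simpa using ((hasDerivAt_id y').sub_const w').const_mul p
      have h2 := ((h.g_hasDeriv hcc hci hy'I).sub_const (gF μ σ c x₀ a w')).const_mul γ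
      exact (h1.sub_const K).add h2
    have hden : HasDerivAt (fun y => xiF μ σ x₀ a y - xiF μ σ x₀ a w')
        (Mab μ σ x₀ a y' * sDen μ σ x₀ y') y' :=
      (h.xi_hasDeriv hy'I).sub_const (xiF μ σ x₀ a w')
    have hFd := hnum.div hden hΔξ.ne'
    have hz := hloc.hasDerivAt_eq_zero hFd
    rcases div_eq_zero_iff.1 hz with h0 | h0
    swap
    · exact absurd h0 (pow_ne_zero 2 hΔξ.ne')
    have hMs : 0 < Mab μ σ x₀ a y' * sDen μ σ x₀ y' :=
      mul_pos (h.M_pos hy'I) (s_pos y')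
    rw [h.hF_eq hμa hsa hci hy'I]
    simp only [FF]
    rw [div_eq_div_iff hΔξ.ne' hMs.ne']
    nlinarith [h0]

end Ctx

set_option maxHeartbeats 1000000 in
theorem statement11    (a : ℝ) (b : EReal) (hab : (a : EReal) < b)
    (μ σ : ℝ → ℝ) (x₀ : ℝ) (hx₀ : x₀ ∈ stInt a b)
    (hμcont : ContinuousOn μ (stInt a b)) (hσcont : ContinuousOn σ (stInt a b))
    (hσpos : ∀ x ∈ stInt a b, 0 < (σ x) ^ 2)
    (hMfin : ∀ x ∈ stInt a b, IntegrableOn (mDen μ σ x₀) (Set.Ioo a x))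
    (hsa : Tendsto (sDen μ σ x₀) (𝓝[>] a) atTop)
    (hsMb : Tendsto (fun x => sDen μ σ x₀ x * Mab μ σ x₀ a x) (atB b) atTop)
    (hbnat : Tendsto (xiF μ σ x₀ a) (atB b) atTop)
    (hanat : Tendsto (xiF μ σ x₀ a) (𝓝[>] a) atBot)
    (μa : ℝ) (hμa : Tendsto μ (𝓝[>] a) (𝓝 μa))
    (c : ℝ → ℝ) (hccont : ContinuousOn c (stInt a b))
    (hcnn : ∀ x ∈ stInt a b, 0 ≤ c x) (hcmono : MonotoneOn c (stInt a b))
    (ca cb : ℝ) (hca : Tendsto c (𝓝[>] a) (𝓝 ca)) (hcb : Tendsto c (atB b) (𝓝 cb))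
    (hca0 : 0 ≤ ca) (hcacb : ca < cb)
    (p K γ : ℝ) (hp : 0 < p) (hK : 0 < K) (hγ : 0 < γ)
    (hint : ∃ w y : ℝ, a < w ∧ w < y ∧ (y : EReal) < b ∧
      γ * cbar μ σ c x₀ a b cb < FF μ σ c x₀ a p K γ w y) :
    (∃ w' y' : ℝ, a < w' ∧ w' < y' ∧ (y' : EReal) < b ∧
      ∀ w y : ℝ, a < w → w < y → (y : EReal) < b →
        FF μ σ c x₀ a p K γ w y ≤ FF μ σ c x₀ a p K γ w' y') ∧
    (∀ w' y' : ℝ, a < w' → w' < y' → (y' : EReal) < b →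
      (∀ w y : ℝ, a < w → w < y → (y : EReal) < b →
        FF μ σ c x₀ a p K γ w y ≤ FF μ σ c x₀ a p K γ w' y') →
      FF μ σ c x₀ a p K γ w' y' = hF μ σ c x₀ a p γ w' ∧
      FF μ σ c x₀ a p K γ w' y' = hF μ σ c x₀ a p γ y') := by
  classical
  have h : Ctx a b μ σ x₀ := ⟨hab, hx₀, hμcont, hσcont, hσpos, hMfin⟩
  have hμa0 : μa = 0 := h.mua_zero hμa hsa hanat
  subst hμa0
  have hci : ∀ x ∈ stInt a b, IntegrableOn (fun u => c u * mDen μ σ x₀ u) (Ioo a x) :=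
    fun x hx => h.cm_int hccont hcnn hcmono hcb hx
  have hfoc : ∀ w' y' : ℝ, a < w' → w' < y' → (y' : EReal) < b →
      (∀ w y : ℝ, a < w → w < y → (y : EReal) < b →
        FF μ σ c x₀ a p K γ w y ≤ FF μ σ c x₀ a p K γ w' y') →
      FF μ σ c x₀ a p K γ w' y' = hF μ σ c x₀ a p γ w' ∧
      FF μ σ c x₀ a p K γ w' y' = hF μ σ c x₀ a p γ y' := by
    intro w' y' hw1 hwy hy2 hmax
    have hw'I : w' ∈ stInt a b := ⟨hw1, lt_trans (EReal.coe_lt_coe_iff.2 hwy) hy2⟩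
    have hy'I : y' ∈ stInt a b := ⟨lt_trans hw1 hwy, hy2⟩
    exact h.foc hccont hci hμa hsa hw'I hy'I hwy
      (fun w y hw hy hlt => hmax w y hw.1 hlt hy.2)
  refine ⟨?_, hfoc⟩
  -- ===== existence of a maximizer =====
  obtain ⟨wt, yt, hwt1, hwty, hyt2, hFgt⟩ := hint
  have hwtI : wt ∈ stInt a b := ⟨hwt1, lt_trans (EReal.coe_lt_coe_iff.2 hwty) hyt2⟩
  have hytI : yt ∈ stInt a b := ⟨lt_trans hwt1 hwty, hyt2⟩
  set L := γ * cbar μ σ c x₀ a b cb with hL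
  set F₀ := FF μ σ c x₀ a p K γ wt yt with hF₀
  set r₀ := (L + F₀) / 2 with hr₀
  have hLF : L < F₀ := hFgt
  have hLr₀ : L < r₀ := by rw [hr₀]; linarith
  have hr₀F : r₀ < F₀ := by rw [hr₀]; linarith
  have hF₀r₀ : 0 < F₀ - r₀ := by linarith
  have hcaL : γ * ca ≤ L := by
    rw [hL]
    exact mul_le_mul_of_nonneg_left
      (h.cbar_ge hccont hcnn hcmono hca hcb hcacb) hγ.le
  obtain ⟨α, hαI, hαw, hTailA⟩ :=
    h.tail_a hca hμa hsa hci hp hγ (lt_of_le_of_lt hcaL hLr₀) hwtI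
  obtain ⟨β, hβI, hβy, hTailB⟩ :=
    h.tail_b hccont hcnn hcmono hcb hsMb hp hγ (by rw [hL] at hLr₀; exact hLr₀) hytI
  have hΘL := h.Phi_anti_Iic hccont hci (r := r₀) (α := α) hTailA
  have hΘR := h.Phi_anti_Ici hccont hci (r := r₀) (β := β) hTailB
  set Θ : ℝ → ℝ := fun x => p * x + γ * gF μ σ c x₀ a x - r₀ * xiF μ σ x₀ a x with hΘ
  set Ψ : ℝ → ℝ := fun x => p * x + γ * gF μ σ c x₀ a x - F₀ * xiF μ σ x₀ a x with hΨ
  have hΨΘ : ∀ x, Ψ x = Θ x - (F₀ - r₀) * xiF μ σ x₀ a x := fun x => by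
    simp only [hΨ, hΘ]; ring
  have hξmono := (h.xi_strictMono).monotoneOn
  have hcrit : ∀ w y, w ∈ stInt a b → y ∈ stInt a b → w < y →
      (F₀ ≤ FF μ σ c x₀ a p K γ w y ↔ K ≤ Ψ y - Ψ w) := by
    intro w y hw hy hlt
    have hd : 0 < xiF μ σ x₀ a y - xiF μ σ x₀ a w :=
      sub_pos.2 (h.xi_strictMono hw hy hlt)
    simp only [FF, hΨ]
    rw [le_div_iff₀ hd]
    constructor <;> intro h1 <;> nlinarith [h1]
  have hSL : ∀ w y, w ∈ stInt a b → y ∈ stInt a b → w < y → y ≤ α → Ψ y < Ψ w := by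
    intro w y hw hy hlt hyα
    have h1 : Θ y ≤ Θ w := hΘL ⟨hw, le_trans hlt.le hyα⟩ ⟨hy, hyα⟩ hlt.le
    have h2 : xiF μ σ x₀ a w < xiF μ σ x₀ a y := h.xi_strictMono hw hy hlt
    rw [hΨΘ, hΨΘ]
    nlinarith [mul_pos hF₀r₀ (sub_pos.2 h2)]
  have hSR : ∀ w y, w ∈ stInt a b → y ∈ stInt a b → w < y → β ≤ w → Ψ y < Ψ w := by
    intro w y hw hy hlt hβw
    have h1 : Θ y ≤ Θ w := hΘR ⟨hw, hβw⟩ ⟨hy, le_trans hβw hlt.le⟩ hlt.le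
    have h2 : xiF μ σ x₀ a w < xiF μ σ x₀ a y := h.xi_strictMono hw hy hlt
    rw [hΨΘ, hΨΘ]
    nlinarith [mul_pos hF₀r₀ (sub_pos.2 h2)]
  have hP1 : ∀ w ∈ stInt a b, w ≤ α →
      Ψ α + (F₀ - r₀) * (xiF μ σ x₀ a α - xiF μ σ x₀ a w) ≤ Ψ w := by
    intro w hw hwα
    have h1 : Θ α ≤ Θ w := hΘL ⟨hw, hwα⟩ ⟨hαI, le_refl α⟩ hwα
    rw [hΨΘ, hΨΘ]
    nlinarith [h1]
  have hP2 : ∀ y ∈ stInt a b, β ≤ y →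
      Ψ y + (F₀ - r₀) * (xiF μ σ x₀ a y - xiF μ σ x₀ a β) ≤ Ψ β := by
    intro y hy hβy'
    have h1 : Θ y ≤ Θ β := hΘR ⟨hβI, le_refl β⟩ ⟨hy, hβy'⟩ hβy'
    rw [hΨΘ, hΨΘ]
    nlinarith [h1]
  have hαβ : α < β := lt_trans (lt_trans hαw hwty) hβy
  have hΨcont : ContinuousOn Ψ (stInt a b) := by
    rw [hΨ]
    exact fun x hx =>
      ((h.Phi_hasDeriv hccont hci F₀ hx).continuousAt).continuousWithinAt
  obtain ⟨xM, hxMmem, hxMmax⟩ := isCompact_Icc.exists_isMaxOn (nonempty_Icc.2 hαβ.le)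
    (hΨcont.mono (Icc_subset_stInt hαI hβI))
  set Mx := Ψ xM with hMx
  set κ := xiF μ σ x₀ a α - (Mx - K - Ψ α) / (F₀ - r₀) with hκ
  have hw₂ev : ∀ᶠ x in 𝓝[>] a, xiF μ σ x₀ a x ≤ κ - 1 := tendsto_atBot.1 hanat _
  obtain ⟨w₂, hw₂I, hw₂α, hw₂P⟩ := nhdsGT_extract hw₂ev hαI
  have hw₂β : w₂ < β := lt_trans hw₂α hαβ
  obtain ⟨xm, hxmmem, hxmmin⟩ := isCompact_Icc.exists_isMinOn (nonempty_Icc.2 hw₂β.le)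
    (hΨcont.mono (Icc_subset_stInt hw₂I hβI))
  set mn := Ψ xm with hmn
  set κ' := xiF μ σ x₀ a β + (Ψ β - mn - K) / (F₀ - r₀) with hκ'
  have hy₂ev : ∀ᶠ y in atB b, κ' + 1 ≤ xiF μ σ x₀ a y := hbnat.eventually_ge_atTop _
  obtain ⟨y₂, hy₂I, hy₂β, hy₂P⟩ := atB_extract h.hab hy₂ev hβI
  have hw₂y₂ : w₂ < y₂ := lt_trans hw₂β hy₂β
  have hIccsub : Icc w₂ y₂ ⊆ stInt a b := Icc_subset_stInt hw₂I hy₂I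
  obtain ⟨z1, hz1m, hz1⟩ := isCompact_Icc.exists_isMaxOn (nonempty_Icc.2 hw₂y₂.le)
    (((h.Ac_cont hccont hci).mul h.s_cont).mono hIccsub)
  set C1 := Ac μ σ c x₀ a z1 * sDen μ σ x₀ z1 with hC1
  have hC1nn : 0 ≤ C1 :=
    mul_nonneg (h.Ac_nonneg hcnn (hIccsub hz1m)) (Ctx.s_pos (μ := μ) (σ := σ) (x₀ := x₀) z1).le
  obtain ⟨z2, hz2m, hz2⟩ := isCompact_Icc.exists_isMaxOn (nonempty_Icc.2 hw₂y₂.le)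
    ((h.M_cont.mul h.s_cont).mono hIccsub)
  set C2 := Mab μ σ x₀ a z2 * sDen μ σ x₀ z2 with hC2
  have hC2nn : 0 ≤ C2 :=
    (mul_pos (h.M_pos (hIccsub hz2m)) (Ctx.s_pos (μ := μ) (σ := σ) (x₀ := x₀) z2)).le
  have hDpos : 0 < p + γ * C1 + |F₀| * C2 := by positivity
  set δ := K / (p + γ * C1 + |F₀| * C2) with hδ
  have hδpos : 0 < δ := div_pos hK hDpos
  -- ===== the localization claim =====
  have hClaim : ∀ w y, w ∈ stInt a b → y ∈ stInt a b → w < y → K ≤ Ψ y - Ψ w →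
      w ∈ Icc w₂ y₂ ∧ y ∈ Icc w₂ y₂ ∧ w + δ ≤ y := by
    intro w y hw hy hlt hKle
    have hyα : α < y := by
      by_contra hcon
      push_neg at hcon
      have := hSL w y hw hy hlt hcon
      linarith
    have hΨyMx : Ψ y ≤ Mx := by
      rcases le_total y β with hyβ | hβy'
      · exact isMaxOn_iff.1 hxMmax y ⟨hyα.le, hyβ⟩
      · have h1 := hP2 y hy hβy'
        have h2 : xiF μ σ x₀ a β ≤ xiF μ σ x₀ a y := hξmono hβI hy hβy'
        have h3 : Ψ y ≤ Ψ β := by nlinarith [mul_nonneg hF₀r₀.le (sub_nonneg.2 h2)]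
        have h4 : Ψ β ≤ Mx := isMaxOn_iff.1 hxMmax β ⟨hαβ.le, le_refl β⟩
        linarith
    have hΨw : Ψ w ≤ Mx - K := by linarith
    have hww₂ : w₂ ≤ w := by
      by_contra hcon
      push_neg at hcon
      have hwα : w ≤ α := le_trans hcon.le hw₂α.le
      have h1 := hP1 w hw hwα
      have hξw : xiF μ σ x₀ a w ≤ κ - 1 := hw₂P w ⟨hw.1, hcon.le⟩
      have h2 : (F₀ - r₀) * (xiF μ σ x₀ a α - xiF μ σ x₀ a w) ≤ Mx - K - Ψ α := by
        linarith
      have h3 : xiF μ σ x₀ a α - xiF μ σ x₀ a w ≤ (Mx - K - Ψ α) / (F₀ - r₀) := by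
        rw [le_div_iff₀ hF₀r₀]
        linarith
      rw [hκ] at hξw
      linarith
    have hwβ : w < β := by
      by_contra hcon
      push_neg at hcon
      have := hSR w y hw hy hlt hcon
      linarith
    have hmnw : mn ≤ Ψ w := isMinOn_iff.1 hxmmin w ⟨hww₂, hwβ.le⟩
    have hyy₂ : y ≤ y₂ := by
      by_contra hcon
      push_neg at hcon
      have hβy2 : β ≤ y := le_trans hy₂β.le hcon.le
      have h1 := hP2 y hy hβy2
      have hξy : κ' + 1 ≤ xiF μ σ x₀ a y := hy₂P y hy hcon.le
      have h2 : (F₀ - r₀) * (xiF μ σ x₀ a y - xiF μ σ x₀ a β) ≤ Ψ β - mn - K := by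
        linarith
      have h3 : xiF μ σ x₀ a y - xiF μ σ x₀ a β ≤ (Ψ β - mn - K) / (F₀ - r₀) := by
        rw [le_div_iff₀ hF₀r₀]
        linarith
      rw [hκ'] at hξy
      linarith
    have hwmem : w ∈ Icc w₂ y₂ := ⟨hww₂, le_trans hlt.le hyy₂⟩
    have hymem : y ∈ Icc w₂ y₂ := ⟨le_trans hww₂ hlt.le, hyy₂⟩
    refine ⟨hwmem, hymem, ?_⟩
    have hΔg : gF μ σ c x₀ a y - gF μ σ c x₀ a w ≤ C1 * (y - w) := by
      rw [h.g_diff hccont hci hw hy]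
      have h1 : ∫ v in w..y, Ac μ σ c x₀ a v * sDen μ σ x₀ v
          ≤ ∫ v in w..y, (fun _ => C1) v := by
        apply intervalIntegral.integral_mono_on hlt.le (h.g_intInt hccont hci hw hy)
          intervalIntegrable_const
        intro v hv
        exact isMaxOn_iff.1 hz1 v ⟨le_trans hwmem.1 hv.1, le_trans hv.2 hymem.2⟩
      rw [intervalIntegral.integral_const, smul_eq_mul] at h1
      nlinarith [h1]
    have hΔξpos : 0 ≤ xiF μ σ x₀ a y - xiF μ σ x₀ a w :=
      sub_nonneg.2 (hξmono hw hy hlt.le)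
    have hΔξ : xiF μ σ x₀ a y - xiF μ σ x₀ a w ≤ C2 * (y - w) := by
      rw [h.xi_diff hw hy]
      have h1 : ∫ v in w..y, Mab μ σ x₀ a v * sDen μ σ x₀ v
          ≤ ∫ v in w..y, (fun _ => C2) v := by
        apply intervalIntegral.integral_mono_on hlt.le (h.xi_intInt hw hy)
          intervalIntegrable_const
        intro v hv
        exact isMaxOn_iff.1 hz2 v ⟨le_trans hwmem.1 hv.1, le_trans hv.2 hymem.2⟩
      rw [intervalIntegral.integral_const, smul_eq_mul] at h1
      nlinarith [h1]
    have hFterm : -F₀ * (xiF μ σ x₀ a y - xiF μ σ x₀ a w) ≤ |F₀| * (C2 * (y - w)) := by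
      have h1 : -F₀ ≤ |F₀| := neg_le_abs F₀
      have h2 : -F₀ * (xiF μ σ x₀ a y - xiF μ σ x₀ a w)
          ≤ |F₀| * (xiF μ σ x₀ a y - xiF μ σ x₀ a w) :=
        mul_le_mul_of_nonneg_right h1 hΔξpos
      have h3 : |F₀| * (xiF μ σ x₀ a y - xiF μ σ x₀ a w) ≤ |F₀| * (C2 * (y - w)) :=
        mul_le_mul_of_nonneg_left hΔξ (abs_nonneg F₀)
      linarith
    have hΨdiff : Ψ y - Ψ w = p * (y - w) + γ * (gF μ σ c x₀ a y - gF μ σ c x₀ a w)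
        - F₀ * (xiF μ σ x₀ a y - xiF μ σ x₀ a w) := by
      simp only [hΨ]; ring
    have hγΔg : γ * (gF μ σ c x₀ a y - gF μ σ c x₀ a w) ≤ γ * (C1 * (y - w)) :=
      mul_le_mul_of_nonneg_left hΔg hγ.le
    have hKD : K ≤ (p + γ * C1 + |F₀| * C2) * (y - w) := by nlinarith [hKle]
    have hfin : δ ≤ y - w := by
      rw [hδ, div_le_iff₀ hDpos]
      nlinarith [hKD]
    linarith
  -- ===== compact maximization =====
  set T : Set (ℝ × ℝ) := {q | q.1 ∈ Icc w₂ y₂ ∧ q.2 ∈ Icc w₂ y₂ ∧ q.1 + δ ≤ q.2} with hT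
  have hTcompact : IsCompact T := by
    apply IsCompact.of_isClosed_subset (isCompact_Icc.prod isCompact_Icc)
    · have hTeq : T = (Icc w₂ y₂ ×ˢ Icc w₂ y₂) ∩ {q : ℝ × ℝ | q.1 + δ ≤ q.2} := by
        ext q
        simp only [hT, Set.mem_inter_iff, Set.mem_setOf_eq, Set.mem_prod]
        tauto
      rw [hTeq]
      exact (isClosed_Icc.prod isClosed_Icc).inter
        (isClosed_le (continuous_fst.add continuous_const) continuous_snd)
    · intro q hq
      exact ⟨hq.1, hq.2.1⟩
  have hTne : (wt, yt) ∈ T := by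
    have h1 : F₀ ≤ FF μ σ c x₀ a p K γ wt yt := le_of_eq hF₀
    have h2 := hClaim wt yt hwtI hytI hwty ((hcrit wt yt hwtI hytI hwty).1 h1)
    exact ⟨h2.1, h2.2.1, h2.2.2⟩
  have hFFcont : ContinuousOn (fun q : ℝ × ℝ => FF μ σ c x₀ a p K γ q.1 q.2) T := by
    intro q hq
    apply ContinuousAt.continuousWithinAt
    have hq1 : q.1 ∈ stInt a b := hIccsub hq.1
    have hq2 : q.2 ∈ stInt a b := hIccsub hq.2.1
    have hq12 : q.1 < q.2 := by
      have := hq.2.2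
      linarith
    have hg1 : ContinuousAt (fun q : ℝ × ℝ => gF μ σ c x₀ a q.1) q :=
      ((h.g_hasDeriv hccont hci hq1).continuousAt).comp continuous_fst.continuousAt
    have hg2 : ContinuousAt (fun q : ℝ × ℝ => gF μ σ c x₀ a q.2) q :=
      ((h.g_hasDeriv hccont hci hq2).continuousAt).comp continuous_snd.continuousAt
    have hxi1 : ContinuousAt (fun q : ℝ × ℝ => xiF μ σ x₀ a q.1) q :=
      ((h.xi_hasDeriv hq1).continuousAt).comp continuous_fst.continuousAt
    have hxi2 : ContinuousAt (fun q : ℝ × ℝ => xiF μ σ x₀ a q.2) q :=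
      ((h.xi_hasDeriv hq2).continuousAt).comp continuous_snd.continuousAt
    have hden : xiF μ σ x₀ a q.2 - xiF μ σ x₀ a q.1 ≠ 0 :=
      (sub_pos.2 (h.xi_strictMono hq1 hq2 hq12)).ne'
    exact ContinuousAt.div
      ((((continuous_snd.continuousAt.sub continuous_fst.continuousAt).const_mul p).sub
        continuousAt_const).add ((hg2.sub hg1).const_mul γ))
      (hxi2.sub hxi1) hden
  obtain ⟨q, hqT, hqmax⟩ := hTcompact.exists_isMaxOn ⟨(wt, yt), hTne⟩ hFFcont
  have hq1I : q.1 ∈ stInt a b := hIccsub hqT.1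
  have hq2I : q.2 ∈ stInt a b := hIccsub hqT.2.1
  have hq12 : q.1 < q.2 := by have := hqT.2.2; linarith
  refine ⟨q.1, q.2, hq1I.1, hq12, hq2I.2, ?_⟩
  intro w y hw hlt hy
  have hwI : w ∈ stInt a b := ⟨hw, lt_trans (EReal.coe_lt_coe_iff.2 hlt) hy⟩
  have hyI : y ∈ stInt a b := ⟨lt_trans hw hlt, hy⟩
  by_cases hcase : F₀ ≤ FF μ σ c x₀ a p K γ w y
  · have hmem := hClaim w y hwI hyI hlt ((hcrit w y hwI hyI hlt).1 hcase)
    have : (w, y) ∈ T := ⟨hmem.1, hmem.2.1, hmem.2.2⟩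
    exact isMaxOn_iff.1 hqmax (w, y) this
  · push_neg at hcase
    have h1 : FF μ σ c x₀ a p K γ wt yt ≤ FF μ σ c x₀ a p K γ q.1 q.2 := isMaxOn_iff.1 hqmax (wt, yt) hTne
    have h2 : F₀ = FF μ σ c x₀ a p K γ wt yt := hF₀
    linarith
end
end

section
/- Suppose lim_{x→a⁺} s(x) = ∞ and lim_{x→b} s(x)·M[a,x] = ∞. Let F* be a real number with F* > γ c̄(b) and define G(x) = F* ξ(x) − γ g(x) for x ∈ (a,b). Then G′(x) > 0 for all x ∈ (a,b); that is, G is strictly increasing on (a,b). -/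
open MeasureTheory Filter Set Topology
open scoped Classical

noncomputable section

lemma my_primitive_hasDerivAt {S : Set ℝ} (hSo : IsOpen S) (hSc : S.OrdConnected)
    {f : ℝ → ℝ} (hf : ContinuousOn f S) {x₀ x : ℝ} (hx₀ : x₀ ∈ S) (hx : x ∈ S) :
    HasDerivAt (fun t => ∫ y in x₀..t, f y) (f x) x :=
  intervalIntegral.integral_hasDerivAt_right
    ((hf.mono (hSc.uIcc_subset hx₀ hx)).intervalIntegrable)
    (hf.stronglyMeasurableAtFilter hSo x hx)
    (hf.continuousAt (hSo.mem_nhds hx))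

lemma my_isOpen_stInt (a : ℝ) (b : EReal) : IsOpen (stInt a b) := by
  have h : stInt a b = Ioi a ∩ ((↑) ⁻¹' Iio b : Set ℝ) := rfl
  rw [h]
  exact isOpen_Ioi.inter (isOpen_Iio.preimage continuous_coe_real_ereal)

lemma my_ordConnected_stInt (a : ℝ) (b : EReal) : (stInt a b).OrdConnected := by
  constructor
  intro x hx y hy z hz
  exact ⟨hx.1.trans_le hz.1, lt_of_le_of_lt (EReal.coe_le_coe_iff.2 hz.2) hy.2⟩

lemma my_Ioo_subset_stInt {a : ℝ} {b : EReal} {x : ℝ} (hx : x ∈ stInt a b) :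
    Set.Ioo a x ⊆ stInt a b := fun y hy =>
  ⟨hy.1, lt_trans (EReal.coe_lt_coe_iff.2 hy.2) hx.2⟩

/-- continuity of `x ↦ ∫_{Ioo a x} f` on `stInt a b`. -/
lemma my_cont_int {a : ℝ} {b : EReal} {f : ℝ → ℝ} (hab : (a:EReal) < b)
    (hf : ContinuousOn f (stInt a b))
    (hfi : ∀ x ∈ stInt a b, IntegrableOn f (Set.Ioo a x)) :
    ContinuousOn (fun x => ∫ u in Set.Ioo a x, f u) (stInt a b) := by
  intro x hx
  set S := stInt a b with hS
  have hSo := my_isOpen_stInt a b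
  have hSc := my_ordConnected_stInt a b
  set x₁ := (a + x) / 2 with hx₁def
  have hax₁ : a < x₁ := by simp [hx₁def]; linarith [hx.1]
  have hx₁x : x₁ < x := by simp [hx₁def]; linarith [hx.1]
  have hx₁S : x₁ ∈ S := my_Ioo_subset_stInt hx ⟨hax₁, hx₁x⟩
  set U := S ∩ Set.Ioi x₁ with hU
  have hUo : IsOpen U := hSo.inter isOpen_Ioi
  have hxU : x ∈ U := ⟨hx, hx₁x⟩
  have key : ∀ t ∈ U, (∫ u in Set.Ioo a t, f u)
      = (∫ u in Set.Ioo a x₁, f u) + ∫ u in x₁..t, f u := by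
    intro t ht
    have hx₁t : x₁ ≤ t := le_of_lt ht.2
    have htS : t ∈ S := ht.1
    have hIt : IntegrableOn f (Set.Ioo a t) := hfi t htS
    have h1 : IntegrableOn f (Set.Ioo a x₁) := hIt.mono_set
      (Set.Ioo_subset_Ioo le_rfl hx₁t)
    have h2 : IntegrableOn f (Set.Ico x₁ t) := hIt.mono_set
      (fun u hu => ⟨lt_of_lt_of_le hax₁ hu.1, hu.2⟩)
    have hdisj : Disjoint (Set.Ioo a x₁) (Set.Ico x₁ t) :=
      Set.disjoint_left.2 fun u hu hu' => absurd hu.2 (not_lt.2 hu'.1)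
    rw [← Set.Ioo_union_Ico_eq_Ioo hax₁ hx₁t,
      setIntegral_union hdisj measurableSet_Ico h1 h2,
      MeasureTheory.integral_Ico_eq_integral_Ioo,
      intervalIntegral.integral_of_le hx₁t, integral_Ioc_eq_integral_Ioo]
  have hprim : HasDerivAt (fun t => ∫ u in x₁..t, f u) (f x) x :=
    my_primitive_hasDerivAt hSo hSc hf hx₁S hx
  have hca : ContinuousAt (fun t => (∫ u in Set.Ioo a x₁, f u) + ∫ u in x₁..t, f u) x :=
    continuousAt_const.add hprim.continuousAt
  have heq : (fun t => (∫ u in Set.Ioo a x₁, f u) + ∫ u in x₁..t, f u)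
      =ᶠ[𝓝 x] (fun t => ∫ u in Set.Ioo a t, f u) := by
    filter_upwards [hUo.mem_nhds hxU] with t ht
    exact (key t ht).symm
  exact (hca.congr heq).continuousWithinAt

theorem statement14    (a : ℝ) (b : EReal) (hab : (a : EReal) < b)
    (μ σ : ℝ → ℝ) (x₀ : ℝ) (hx₀ : x₀ ∈ stInt a b)
    (hμcont : ContinuousOn μ (stInt a b)) (hσcont : ContinuousOn σ (stInt a b))
    (hσpos : ∀ x ∈ stInt a b, 0 < (σ x) ^ 2)
    (hMfin : ∀ x ∈ stInt a b, IntegrableOn (mDen μ σ x₀) (Set.Ioo a x))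
    (hsa : Tendsto (sDen μ σ x₀) (𝓝[>] a) atTop)
    (hsMb : Tendsto (fun x => sDen μ σ x₀ x * Mab μ σ x₀ a x) (atB b) atTop)
    (c : ℝ → ℝ) (hccont : ContinuousOn c (stInt a b))
    (hcnn : ∀ x ∈ stInt a b, 0 ≤ c x) (hcmono : MonotoneOn c (stInt a b))
    (ca cb : ℝ) (hca : Tendsto c (𝓝[>] a) (𝓝 ca)) (hcb : Tendsto c (atB b) (𝓝 cb))
    (hca0 : 0 ≤ ca) (hcacb : ca < cb)
    (γ : ℝ) (hγ : 0 < γ) (Fstar : ℝ) (hFstar : γ * cbar μ σ c x₀ a b cb < Fstar) :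
    (∀ x ∈ stInt a b,
      0 < deriv (fun t => Fstar * xiF μ σ x₀ a t - γ * gF μ σ c x₀ a t) x) ∧
    StrictMonoOn (fun t => Fstar * xiF μ σ x₀ a t - γ * gF μ σ c x₀ a t) (stInt a b) := by
  have hSo := my_isOpen_stInt a b
  have hSc := my_ordConnected_stInt a b
  have hSm : MeasurableSet (stInt a b) := hSo.measurableSet
  -- continuity and positivity of sDen
  have hf2 : ContinuousOn (fun y => 2 * μ y / (σ y) ^ 2) (stInt a b) :=
    (continuousOn_const.mul hμcont).div (hσcont.pow 2) (fun x hx => (hσpos x hx).ne')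
  have hPcont : ContinuousOn (fun x => ∫ y in x₀..x, 2 * μ y / (σ y) ^ 2) (stInt a b) :=
    fun x hx => (my_primitive_hasDerivAt hSo hSc hf2 hx₀ hx).continuousAt.continuousWithinAt
  have hscont : ContinuousOn (sDen μ σ x₀) (stInt a b) :=
    Real.continuous_exp.comp_continuousOn hPcont.neg
  have hspos : ∀ x, 0 < sDen μ σ x₀ x := fun x => Real.exp_pos _
  -- continuity and positivity of mDen
  have hdenpos : ∀ x ∈ stInt a b, 0 < (σ x) ^ 2 * sDen μ σ x₀ x :=
    fun x hx => mul_pos (hσpos x hx) (hspos x)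
  have hmcont : ContinuousOn (mDen μ σ x₀) (stInt a b) :=
    continuousOn_const.div ((hσcont.pow 2).mul hscont) (fun x hx => (hdenpos x hx).ne')
  have hmpos : ∀ x ∈ stInt a b, 0 < mDen μ σ x₀ x :=
    fun x hx => div_pos two_pos (hdenpos x hx)
  -- atB b is nontrivial and c ≤ cb on stInt
  have hcle : ∀ x ∈ stInt a b, c x ≤ cb := by
    intro x hx
    by_cases hb : b = ⊤
    · have hBf : atB b = Filter.atTop := by rw [atB, if_pos hb]
      refine ge_of_tendsto (x := Filter.atTop) (by rwa [hBf] at hcb) ?_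
      filter_upwards [eventually_ge_atTop x] with y hy
      exact hcmono hx ⟨lt_of_lt_of_le hx.1 hy, hb ▸ EReal.coe_lt_top y⟩ hy
    · have hbb : ((b.toReal : ℝ) : EReal) = b :=
        EReal.coe_toReal hb (fun h => by simp [h] at hab)
      have hxb : x < b.toReal := by
        rw [← EReal.coe_lt_coe_iff, hbb]; exact hx.2
      have hBf : atB b = 𝓝[<] b.toReal := by rw [atB, if_neg hb]
      haveI : (𝓝[<] b.toReal).NeBot := nhdsLT_neBot _
      refine ge_of_tendsto (x := 𝓝[<] b.toReal) (by rwa [hBf] at hcb) ?_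
      rw [Filter.eventually_iff_exists_mem]
      refine ⟨Set.Ioo x b.toReal, Ioo_mem_nhdsLT_of_mem ⟨hxb, le_refl _⟩, ?_⟩
      intro y hy
      have hyS : y ∈ stInt a b := ⟨hx.1.trans hy.1, by
        rw [← hbb]; exact EReal.coe_lt_coe_iff.2 hy.2⟩
      exact hcmono hx hyS hy.1.le
  have hcb0 : 0 ≤ cb := hca0.trans hcacb.le
  -- integrability of c·m on Ioo a x
  have hcmi : ∀ x ∈ stInt a b, IntegrableOn (fun u => c u * mDen μ σ x₀ u) (Set.Ioo a x) := by
    intro x hx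
    refine Integrable.mono ((hMfin x hx).const_mul cb)
      (((hccont.mono (my_Ioo_subset_stInt hx)).mul
        (hmcont.mono (my_Ioo_subset_stInt hx))).aestronglyMeasurable measurableSet_Ioo) ?_
    rw [ae_restrict_iff' measurableSet_Ioo]
    refine Filter.Eventually.of_forall (fun u hu => ?_)
    have huS := my_Ioo_subset_stInt hx hu
    have h1 : 0 ≤ c u * mDen μ σ x₀ u := mul_nonneg (hcnn u huS) (hmpos u huS).le
    have h2 : c u * mDen μ σ x₀ u ≤ cb * mDen μ σ x₀ u :=
      mul_le_mul_of_nonneg_right (hcle u huS) (hmpos u huS).le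
    rw [Real.norm_eq_abs, Real.norm_eq_abs, abs_of_nonneg h1,
      abs_of_nonneg (h1.trans h2)]
    exact h2
  -- positivity of Mab
  have hMpos : ∀ x ∈ stInt a b, 0 < Mab μ σ x₀ a x := by
    intro x hx
    rw [Mab, setIntegral_pos_iff_support_of_nonneg_ae ?pos (hMfin x hx)]
    case pos =>
      exact (ae_restrict_iff' measurableSet_Ioo).mpr (Filter.Eventually.of_forall
        (fun u hu => (hmpos u (my_Ioo_subset_stInt hx hu)).le))
    have hsub : Set.Ioo a x ⊆ Function.support (mDen μ σ x₀) ∩ Set.Ioo a x :=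
      fun u hu => ⟨(hmpos u (my_Ioo_subset_stInt hx hu)).ne', hu⟩
    have hvol : (0 : ENNReal) < volume (Set.Ioo a x) := by
      rw [Real.volume_Ioo]
      exact ENNReal.ofReal_pos.2 (sub_pos.2 hx.1)
    exact lt_of_lt_of_le hvol (measure_mono hsub)
  -- the key inequality
  have hkey : ∀ x ∈ stInt a b,
      γ * (∫ u in Set.Ioo a x, c u * mDen μ σ x₀ u) < Fstar * Mab μ σ x₀ a x := by
    intro x hx
    have hM1 := hMpos x hx
    by_cases hI : IntegrableOn (mDen μ σ x₀) (stInt a b)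
    · -- finite total speed measure
      have hcbar : cbar μ σ c x₀ a b cb
          = (∫ u in stInt a b, c u * mDen μ σ x₀ u) / (∫ u in stInt a b, mDen μ σ x₀ u) := by
        rw [cbar, if_pos hI]
      -- decomposition of stInt at x
      have hdec : stInt a b = Set.Ioo a x ∪ (stInt a b ∩ Set.Ici x) := by
        ext u
        constructor
        · intro hu
          rcases lt_or_ge u x with h | h
          · exact Or.inl ⟨hu.1, h⟩
          · exact Or.inr ⟨hu, h⟩
        · rintro (hu | hu)
          · exact my_Ioo_subset_stInt hx hu
          · exact hu.1
      have hdisj : Disjoint (Set.Ioo a x) (stInt a b ∩ Set.Ici x) :=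
        Set.disjoint_left.2 fun u hu hu' => absurd hu.2 (not_lt.2 hu'.2)
      have hmeas2 : MeasurableSet (stInt a b ∩ Set.Ici x) := hSm.inter measurableSet_Ici
      have hIm2 : IntegrableOn (mDen μ σ x₀) (stInt a b ∩ Set.Ici x) :=
        hI.mono_set Set.inter_subset_left
      have hIcmS : IntegrableOn (fun u => c u * mDen μ σ x₀ u) (stInt a b) := by
        refine Integrable.mono (hI.const_mul cb)
          ((hccont.mul hmcont).aestronglyMeasurable hSm) ?_
        rw [ae_restrict_iff' hSm]
        refine Filter.Eventually.of_forall (fun u hu => ?_)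
        have h1 : 0 ≤ c u * mDen μ σ x₀ u := mul_nonneg (hcnn u hu) (hmpos u hu).le
        have h2 : c u * mDen μ σ x₀ u ≤ cb * mDen μ σ x₀ u :=
          mul_le_mul_of_nonneg_right (hcle u hu) (hmpos u hu).le
        rw [Real.norm_eq_abs, Real.norm_eq_abs, abs_of_nonneg h1,
          abs_of_nonneg (h1.trans h2)]
        exact h2
      have hIcm2 : IntegrableOn (fun u => c u * mDen μ σ x₀ u) (stInt a b ∩ Set.Ici x) :=
        hIcmS.mono_set Set.inter_subset_left
      set A := ∫ u in Set.Ioo a x, c u * mDen μ σ x₀ u with hA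
      set B := ∫ u in stInt a b ∩ Set.Ici x, c u * mDen μ σ x₀ u with hB
      set M₁ := Mab μ σ x₀ a x with hM₁
      set M₂ := ∫ u in stInt a b ∩ Set.Ici x, mDen μ σ x₀ u with hM₂
      have hsplitC : (∫ u in stInt a b, c u * mDen μ σ x₀ u) = A + B := by
        rw [hA, hB, ← setIntegral_union hdisj hmeas2 (hcmi x hx) hIcm2, ← hdec]
      have hsplitM : (∫ u in stInt a b, mDen μ σ x₀ u) = M₁ + M₂ := by
        rw [hM₁, Mab, hM₂, ← setIntegral_union hdisj hmeas2 (hMfin x hx) hIm2, ← hdec]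
      have hM2nn : 0 ≤ M₂ := setIntegral_nonneg hmeas2
        (fun u hu => (hmpos u hu.1).le)
      have hAle : A ≤ c x * M₁ := by
        rw [hM₁, Mab, ← MeasureTheory.integral_const_mul]
        refine setIntegral_mono_on (hcmi x hx) ((hMfin x hx).const_mul (c x))
          measurableSet_Ioo (fun u hu => ?_)
        exact mul_le_mul_of_nonneg_right
          (hcmono (my_Ioo_subset_stInt hx hu) hx hu.2.le)
          (hmpos u (my_Ioo_subset_stInt hx hu)).le
      have hBge : c x * M₂ ≤ B := by
        rw [hM₂, ← MeasureTheory.integral_const_mul]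
        refine setIntegral_mono_on (hIm2.const_mul (c x)) hIcm2
          hmeas2 (fun u hu => ?_)
        exact mul_le_mul_of_nonneg_right (hcmono hx hu.1 hu.2)
          (hmpos u hu.1).le
      have hcx : 0 ≤ c x := hcnn x hx
      -- A * (M₁ + M₂) ≤ (A + B) * M₁
      have hmain : A * (M₁ + M₂) ≤ (A + B) * M₁ := by nlinarith
      have hMb : 0 < M₁ + M₂ := lt_of_lt_of_le hM1 (le_add_of_nonneg_right hM2nn)
      rw [hcbar, hsplitC, hsplitM] at hFstar
      have hq : A ≤ (A + B) / (M₁ + M₂) * M₁ := by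
        rw [div_mul_eq_mul_div, le_div_iff₀ hMb]
        linarith
      calc γ * A ≤ γ * ((A + B) / (M₁ + M₂) * M₁) :=
            mul_le_mul_of_nonneg_left hq hγ.le
        _ = γ * ((A + B) / (M₁ + M₂)) * M₁ := by ring
        _ < Fstar * M₁ := mul_lt_mul_of_pos_right hFstar hM1
    · -- infinite total speed measure
      have hcbar : cbar μ σ c x₀ a b cb = cb := by rw [cbar, if_neg hI]
      rw [hcbar] at hFstar
      have hAle : (∫ u in Set.Ioo a x, c u * mDen μ σ x₀ u) ≤ cb * Mab μ σ x₀ a x := by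
        rw [Mab, ← MeasureTheory.integral_const_mul]
        refine setIntegral_mono_on (hcmi x hx) ((hMfin x hx).const_mul cb)
          measurableSet_Ioo (fun u hu => ?_)
        exact mul_le_mul_of_nonneg_right (hcle u (my_Ioo_subset_stInt hx hu))
          (hmpos u (my_Ioo_subset_stInt hx hu)).le
      calc γ * (∫ u in Set.Ioo a x, c u * mDen μ σ x₀ u) ≤ γ * (cb * Mab μ σ x₀ a x) :=
            mul_le_mul_of_nonneg_left hAle hγ.le
        _ = γ * cb * Mab μ σ x₀ a x := by ring
        _ < Fstar * Mab μ σ x₀ a x := mul_lt_mul_of_pos_right hFstar hM1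
  -- continuity of Mab and of x ↦ ∫_{Ioo a x} c·m
  have hMcont : ContinuousOn (fun x => Mab μ σ x₀ a x) (stInt a b) :=
    my_cont_int hab hmcont hMfin
  have hCMcont : ContinuousOn (fun x => ∫ u in Set.Ioo a x, c u * mDen μ σ x₀ u) (stInt a b) :=
    my_cont_int hab (hccont.mul hmcont) hcmi
  -- derivative of G
  have hG : ∀ x ∈ stInt a b,
      HasDerivAt (fun t => Fstar * xiF μ σ x₀ a t - γ * gF μ σ c x₀ a t)
        (sDen μ σ x₀ x * (Fstar * Mab μ σ x₀ a x
          - γ * ∫ u in Set.Ioo a x, c u * mDen μ σ x₀ u)) x := by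
    intro x hx
    have hxi : HasDerivAt (fun t => xiF μ σ x₀ a t) (Mab μ σ x₀ a x * sDen μ σ x₀ x) x :=
      my_primitive_hasDerivAt hSo hSc (hMcont.mul hscont) hx₀ hx
    have hg : HasDerivAt (fun t => gF μ σ c x₀ a t)
        ((∫ u in Set.Ioo a x, c u * mDen μ σ x₀ u) * sDen μ σ x₀ x) x :=
      my_primitive_hasDerivAt hSo hSc (hCMcont.mul hscont) hx₀ hx
    have : HasDerivAt (fun t => Fstar * xiF μ σ x₀ a t - γ * gF μ σ c x₀ a t)
        (Fstar * (Mab μ σ x₀ a x * sDen μ σ x₀ x)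
          - γ * ((∫ u in Set.Ioo a x, c u * mDen μ σ x₀ u) * sDen μ σ x₀ x)) x :=
      (hxi.const_mul Fstar).sub (hg.const_mul γ)
    convert this using 1
    ring
  have hpos : ∀ x ∈ stInt a b,
      0 < deriv (fun t => Fstar * xiF μ σ x₀ a t - γ * gF μ σ c x₀ a t) x := by
    intro x hx
    rw [(hG x hx).deriv]
    exact mul_pos (hspos x) (sub_pos.2 (hkey x hx))
  refine ⟨hpos, ?_⟩
  refine strictMonoOn_of_deriv_pos (hSc.convex) ?_ ?_
  · exact fun x hx => (hG x hx).continuousAt.continuousWithinAt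
  · rw [hSo.interior_eq]; exact hpos
end
end

section
/- Suppose lim_{x→a⁺} s(x) = ∞, and suppose (w*,y*) with a < w* < y* < b is a maximizing pair of F over 𝓡; set F* = F(w*,y*) and G(x) = F* ξ(x) − γ g(x). Then G is twice continuously differentiable on (a,b) and the pair (G, F*) satisfies the quasi-variational system: (i) (σ(x)²/2) G″(x) + μ(x) G′(x) + γ c(x) − F* = 0 for every x ∈ (a,b); (ii) G(w) + p(y − w) − K − G(y) ≤ 0 for every (w,y) with a < w < y < b; and (iii) G(w*) + p(y* − w*) − K − G(y*) = 0. -/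
open MeasureTheory Filter Set Topology
open scoped Classical

noncomputable section

theorem statement15    (a : ℝ) (b : EReal) (hab : (a : EReal) < b)
    (μ σ : ℝ → ℝ) (x₀ : ℝ) (hx₀ : x₀ ∈ stInt a b)
    (hμcont : ContinuousOn μ (stInt a b)) (hσcont : ContinuousOn σ (stInt a b))
    (hσpos : ∀ x ∈ stInt a b, 0 < (σ x) ^ 2)
    (hMfin : ∀ x ∈ stInt a b, IntegrableOn (mDen μ σ x₀) (Set.Ioo a x))
    (hsa : Tendsto (sDen μ σ x₀) (𝓝[>] a) atTop)
    (c : ℝ → ℝ) (hccont : ContinuousOn c (stInt a b))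
    (hcnn : ∀ x ∈ stInt a b, 0 ≤ c x) (hcmono : MonotoneOn c (stInt a b))
    (ca cb : ℝ) (hca : Tendsto c (𝓝[>] a) (𝓝 ca)) (hcb : Tendsto c (atB b) (𝓝 cb))
    (hca0 : 0 ≤ ca) (hcacb : ca < cb)
    (p K γ : ℝ) (hp : 0 < p) (hK : 0 < K) (hγ : 0 < γ)
    (wstar ystar : ℝ) (hws : a < wstar) (hwy : wstar < ystar) (hys : (ystar : EReal) < b)
    (hmax : ∀ w y : ℝ, a < w → w < y → (y : EReal) < b →
      FF μ σ c x₀ a p K γ w y ≤ FF μ σ c x₀ a p K γ wstar ystar)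
    (Fstar : ℝ) (hFstar : Fstar = FF μ σ c x₀ a p K γ wstar ystar)
    (G : ℝ → ℝ) (hG : ∀ x, G x = Fstar * xiF μ σ x₀ a x - γ * gF μ σ c x₀ a x) :
    ContDiffOn ℝ 2 G (stInt a b) ∧
    (∀ x ∈ stInt a b,
      (σ x) ^ 2 / 2 * deriv (deriv G) x + μ x * deriv G x + γ * c x - Fstar = 0) ∧
    (∀ w y : ℝ, a < w → w < y → (y : EReal) < b →
      G w + p * (y - w) - K - G y ≤ 0) ∧
    G wstar + p * (ystar - wstar) - K - G ystar = 0 := by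
  
  -- replace G by its defining formula
  have hGeq : G = fun x => Fstar * xiF μ σ x₀ a x - γ * gF μ σ c x₀ a x := funext hG
  subst hGeq
  -- basic topology of the state interval
  have hSopen : IsOpen (stInt a b) := by
    have h : stInt a b = ((↑) : ℝ → EReal) ⁻¹' (Set.Ioo (a : EReal) b) := by
      ext x; simp [stInt, Set.mem_Ioo, EReal.coe_lt_coe_iff]
    rw [h]
    exact isOpen_Ioo.preimage continuous_coe_real_ereal
  have hOrd : Set.OrdConnected (stInt a b) := by
    constructor
    rintro x ⟨hx1, hx2⟩ y ⟨hy1, hy2⟩ z ⟨hz1, hz2⟩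
    exact ⟨lt_of_lt_of_le hx1 hz1, lt_of_le_of_lt (EReal.coe_le_coe_iff.mpr hz2) hy2⟩
  have hsub : ∀ x ∈ stInt a b, Set.Ioo a x ⊆ stInt a b := by
    rintro x ⟨hx1, hx2⟩ u ⟨hu1, hu2⟩
    exact ⟨hu1, lt_trans (EReal.coe_lt_coe_iff.mpr hu2) hx2⟩
  -- positivity of the densities
  have hspos : ∀ x, 0 < sDen μ σ x₀ x := fun x => Real.exp_pos _
  have hmpos : ∀ x ∈ stInt a b, 0 < mDen μ σ x₀ x := fun x hx =>
    div_pos two_pos (mul_pos (hσpos x hx) (hspos x))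
  have hmnn : ∀ x, 0 ≤ mDen μ σ x₀ x := fun x =>
    div_nonneg two_pos.le (mul_nonneg (sq_nonneg _) (hspos x).le)
  -- the drift-to-variance ratio
  have hfcont : ContinuousOn (fun y => 2 * μ y / (σ y) ^ 2) (stInt a b) :=
    (continuousOn_const.mul hμcont).div (hσcont.pow 2) (fun x hx => (hσpos x hx).ne')
  -- general FTC on the open interval
  have FTC : ∀ f : ℝ → ℝ, ContinuousOn f (stInt a b) → ∀ x ∈ stInt a b,
      HasDerivAt (fun u => ∫ y in x₀..u, f y) (f x) x := by
    intro f hf x hx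
    exact intervalIntegral.integral_hasDerivAt_right
      ((hf.mono (hOrd.uIcc_subset hx₀ hx)).intervalIntegrable)
      (hf.stronglyMeasurableAtFilter hSopen x hx)
      (hf.continuousAt (hSopen.mem_nhds hx))
  -- derivative of the scale density
  have hsderiv : ∀ x ∈ stInt a b, HasDerivAt (sDen μ σ x₀)
      (-(2 * μ x / (σ x) ^ 2) * sDen μ σ x₀ x) x := by
    intro x hx
    have h2 := ((FTC _ hfcont x hx).neg).exp
    rw [mul_comm]
    exact h2
  have hscont : ContinuousOn (sDen μ σ x₀) (stInt a b) := fun x hx =>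
    ((hsderiv x hx).continuousAt).continuousWithinAt
  have hmcont : ContinuousOn (mDen μ σ x₀) (stInt a b) := by
    have h : mDen μ σ x₀ = fun x => 2 / ((σ x) ^ 2 * sDen μ σ x₀ x) := rfl
    rw [h]
    exact continuousOn_const.div ((hσcont.pow 2).mul hscont)
      (fun x hx => (mul_pos (hσpos x hx) (hspos x)).ne')
  -- general derivative of improper integrals from `a`
  have Mderiv : ∀ φ : ℝ → ℝ, ContinuousOn φ (stInt a b) →
      (∀ x ∈ stInt a b, IntegrableOn φ (Set.Ioo a x)) →
      ∀ x ∈ stInt a b, HasDerivAt (fun y => ∫ u in Set.Ioo a y, φ u) (φ x) x := by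
    intro φ hφc hφi x hx
    obtain ⟨hax, hxb⟩ := id hx
    set x₁ := (a + x) / 2 with hx₁def
    have hax₁ : a < x₁ := by rw [hx₁def]; linarith
    have hx₁x : x₁ < x := by rw [hx₁def]; linarith
    have hx₁S : x₁ ∈ stInt a b := ⟨hax₁, lt_trans (EReal.coe_lt_coe_iff.mpr hx₁x) hxb⟩
    have hev : (fun y => ∫ u in Set.Ioo a y, φ u) =ᶠ[𝓝 x]
        (fun y => (∫ u in Set.Ioo a x₁, φ u) + ∫ u in x₁..y, φ u) := by
      have hmem : stInt a b ∩ Set.Ioi x₁ ∈ 𝓝 x :=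
        (hSopen.inter isOpen_Ioi).mem_nhds ⟨hx, hx₁x⟩
      filter_upwards [hmem] with y hy
      obtain ⟨hyS, hy1⟩ := hy
      have hy1' : x₁ ≤ y := le_of_lt hy1
      have hunion : Set.Ioo a y = Set.Ioo a x₁ ∪ Set.Ico x₁ y :=
        (Set.Ioo_union_Ico_eq_Ioo hax₁ hy1').symm
      have hdisj : Disjoint (Set.Ioo a x₁) (Set.Ico x₁ y) := by
        rw [Set.disjoint_left]
        rintro u ⟨_, hu2⟩ ⟨hu3, _⟩
        exact absurd hu3 (not_le.mpr hu2)
      have hIco : Set.Ico x₁ y ⊆ Set.Ioo a y := fun u hu =>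
        ⟨lt_of_lt_of_le hax₁ hu.1, hu.2⟩
      rw [hunion, MeasureTheory.setIntegral_union hdisj measurableSet_Ico
        (hφi x₁ hx₁S) ((hφi y hyS).mono_set hIco),
        MeasureTheory.integral_Ico_eq_integral_Ioo,
        intervalIntegral.integral_of_le hy1', MeasureTheory.integral_Ioc_eq_integral_Ioo]
    have hD : HasDerivAt (fun y => (∫ u in Set.Ioo a x₁, φ u) + ∫ u in x₁..y, φ u) (φ x) x :=
      (intervalIntegral.integral_hasDerivAt_right
        ((hφc.mono (hOrd.uIcc_subset hx₁S hx)).intervalIntegrable)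
        (hφc.stronglyMeasurableAtFilter hSopen x hx)
        (hφc.continuousAt (hSopen.mem_nhds hx))).const_add _
    exact hD.congr_of_eventuallyEq hev
  have hMderiv : ∀ x ∈ stInt a b, HasDerivAt (Mab μ σ x₀ a) (mDen μ σ x₀ x) x :=
    Mderiv _ hmcont hMfin
  have hMcont : ContinuousOn (Mab μ σ x₀ a) (stInt a b) := fun x hx =>
    ((hMderiv x hx).continuousAt).continuousWithinAt
  -- the running-cost speed integral
  have hcmcont : ContinuousOn (fun u => c u * mDen μ σ x₀ u) (stInt a b) := hccont.mul hmcont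
  have hcmint : ∀ x ∈ stInt a b, IntegrableOn (fun u => c u * mDen μ σ x₀ u) (Set.Ioo a x) := by
    intro x hx
    refine MeasureTheory.Integrable.bdd_mul (c := c x) (hMfin x hx)
      ((hccont.mono (hsub x hx)).aestronglyMeasurable measurableSet_Ioo) ?_
    rw [MeasureTheory.ae_restrict_iff' measurableSet_Ioo]
    refine MeasureTheory.ae_of_all _ fun u hu => ?_
    have huS : u ∈ stInt a b := hsub x hx hu
    rw [Real.norm_eq_abs, abs_of_nonneg (hcnn u huS)]
    exact hcmono huS hx hu.2.le
  have hCderiv : ∀ x ∈ stInt a b,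
      HasDerivAt (fun y => ∫ u in Set.Ioo a y, c u * mDen μ σ x₀ u)
        (c x * mDen μ σ x₀ x) x := Mderiv _ hcmcont hcmint
  have hCcont : ContinuousOn (fun y => ∫ u in Set.Ioo a y, c u * mDen μ σ x₀ u) (stInt a b) :=
    fun x hx => ((hCderiv x hx).continuousAt).continuousWithinAt
  -- derivatives of ξ and g
  have hxicont : ContinuousOn (fun v => Mab μ σ x₀ a v * sDen μ σ x₀ v) (stInt a b) :=
    hMcont.mul hscont
  have hxideriv : ∀ x ∈ stInt a b, HasDerivAt (xiF μ σ x₀ a)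
      (Mab μ σ x₀ a x * sDen μ σ x₀ x) x := fun x hx => FTC _ hxicont x hx
  have hgcont : ContinuousOn
      (fun v => (∫ u in Set.Ioo a v, c u * mDen μ σ x₀ u) * sDen μ σ x₀ v) (stInt a b) :=
    hCcont.mul hscont
  have hgderiv : ∀ x ∈ stInt a b, HasDerivAt (gF μ σ c x₀ a)
      ((∫ u in Set.Ioo a x, c u * mDen μ σ x₀ u) * sDen μ σ x₀ x) x :=
    fun x hx => FTC _ hgcont x hx
  -- first derivative of G
  have hGderiv : ∀ x ∈ stInt a b,
      HasDerivAt (fun x => Fstar * xiF μ σ x₀ a x - γ * gF μ σ c x₀ a x)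
        (Fstar * (Mab μ σ x₀ a x * sDen μ σ x₀ x)
          - γ * ((∫ u in Set.Ioo a x, c u * mDen μ σ x₀ u) * sDen μ σ x₀ x)) x :=
    fun x hx => ((hxideriv x hx).const_mul Fstar).sub ((hgderiv x hx).const_mul γ)
  -- second derivative of G (derivative of the above expression)
  have hDderiv : ∀ x ∈ stInt a b,
      HasDerivAt (fun x => Fstar * (Mab μ σ x₀ a x * sDen μ σ x₀ x)
          - γ * ((∫ u in Set.Ioo a x, c u * mDen μ σ x₀ u) * sDen μ σ x₀ x))
        (Fstar * (mDen μ σ x₀ x * sDen μ σ x₀ x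
            + Mab μ σ x₀ a x * (-(2 * μ x / (σ x) ^ 2) * sDen μ σ x₀ x))
          - γ * ((c x * mDen μ σ x₀ x) * sDen μ σ x₀ x
            + (∫ u in Set.Ioo a x, c u * mDen μ σ x₀ u)
              * (-(2 * μ x / (σ x) ^ 2) * sDen μ σ x₀ x))) x :=
    fun x hx =>
      (((hMderiv x hx).mul (hsderiv x hx)).const_mul Fstar).sub
        (((hCderiv x hx).mul (hsderiv x hx)).const_mul γ)
  have hderivG : ∀ x ∈ stInt a b,
      deriv (fun x => Fstar * xiF μ σ x₀ a x - γ * gF μ σ c x₀ a x) x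
        = Fstar * (Mab μ σ x₀ a x * sDen μ σ x₀ x)
          - γ * ((∫ u in Set.Ioo a x, c u * mDen μ σ x₀ u) * sDen μ σ x₀ x) :=
    fun x hx => (hGderiv x hx).deriv
  have hevD : ∀ x ∈ stInt a b,
      deriv (fun x => Fstar * xiF μ σ x₀ a x - γ * gF μ σ c x₀ a x) =ᶠ[𝓝 x]
        (fun x => Fstar * (Mab μ σ x₀ a x * sDen μ σ x₀ x)
          - γ * ((∫ u in Set.Ioo a x, c u * mDen μ σ x₀ u) * sDen μ σ x₀ x)) := by
    intro x hx
    filter_upwards [hSopen.mem_nhds hx] with y hy using hderivG y hy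
  have hderiv2 : ∀ x ∈ stInt a b,
      deriv (deriv (fun x => Fstar * xiF μ σ x₀ a x - γ * gF μ σ c x₀ a x)) x
        = Fstar * (mDen μ σ x₀ x * sDen μ σ x₀ x
            + Mab μ σ x₀ a x * (-(2 * μ x / (σ x) ^ 2) * sDen μ σ x₀ x))
          - γ * ((c x * mDen μ σ x₀ x) * sDen μ σ x₀ x
            + (∫ u in Set.Ioo a x, c u * mDen μ σ x₀ u)
              * (-(2 * μ x / (σ x) ^ 2) * sDen μ σ x₀ x)) := by
    intro x hx
    rw [(hevD x hx).deriv_eq]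
    exact (hDderiv x hx).deriv
  -- positivity of M and of ξ-increments
  have hMpos : ∀ x ∈ stInt a b, 0 < Mab μ σ x₀ a x := by
    intro x hx
    have h : (0 : ℝ) < ∫ u in Set.Ioo a x, mDen μ σ x₀ u := by
      rw [MeasureTheory.setIntegral_pos_iff_support_of_nonneg_ae
        (MeasureTheory.ae_of_all _ fun u => hmnn u) (hMfin x hx)]
      refine lt_of_lt_of_le ?_ (measure_mono
        (fun u hu => ⟨(hmpos u (hsub x hx hu)).ne', hu⟩))
      exact (MeasureTheory.Measure.measure_Ioo_pos _).mpr hx.1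
    exact h
  have hxipos : ∀ w y, w ∈ stInt a b → y ∈ stInt a b → w < y →
      0 < xiF μ σ x₀ a y - xiF μ σ x₀ a w := by
    intro w y hw hy hwy'
    have hint : ∀ z ∈ stInt a b, IntervalIntegrable
        (fun v => Mab μ σ x₀ a v * sDen μ σ x₀ v) volume x₀ z := fun z hz =>
      (hxicont.mono (hOrd.uIcc_subset hx₀ hz)).intervalIntegrable
    have hsubeq : xiF μ σ x₀ a y - xiF μ σ x₀ a w
        = ∫ v in w..y, Mab μ σ x₀ a v * sDen μ σ x₀ v :=
      intervalIntegral.integral_interval_sub_left (hint y hy) (hint w hw)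
    rw [hsubeq]
    refine intervalIntegral.intervalIntegral_pos_of_pos_on
      ((hxicont.mono (hOrd.uIcc_subset hw hy)).intervalIntegrable) ?_ hwy'
    intro v hv
    have hvS : v ∈ stInt a b := hOrd.out hw hy ⟨hv.1.le, hv.2.le⟩
    exact mul_pos (hMpos v hvS) (hspos v)
  refine ⟨?_, ?_, ?_, ?_⟩
  · -- C² regularity
    rw [show (2 : WithTop ℕ∞) = 1 + 1 by norm_num,
      contDiffOn_succ_iff_deriv_of_isOpen hSopen]
    refine ⟨fun x hx => (hGderiv x hx).differentiableAt.differentiableWithinAt,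
      by intro h; exact absurd h (by simp), ?_⟩
    rw [show (1 : WithTop ℕ∞) = 0 + 1 by norm_num,
      contDiffOn_succ_iff_deriv_of_isOpen hSopen]
    refine ⟨?_, by intro h; exact absurd h (by simp), ?_⟩
    · intro x hx
      exact (((hDderiv x hx).congr_of_eventuallyEq
        (hevD x hx)).differentiableAt).differentiableWithinAt
    · rw [contDiffOn_zero]
      have hcont2 : ContinuousOn (fun x => Fstar * (mDen μ σ x₀ x * sDen μ σ x₀ x
            + Mab μ σ x₀ a x * (-(2 * μ x / (σ x) ^ 2) * sDen μ σ x₀ x))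
          - γ * ((c x * mDen μ σ x₀ x) * sDen μ σ x₀ x
            + (∫ u in Set.Ioo a x, c u * mDen μ σ x₀ u)
              * (-(2 * μ x / (σ x) ^ 2) * sDen μ σ x₀ x))) (stInt a b) := by
        exact (continuousOn_const.mul ((hmcont.mul hscont).add
            (hMcont.mul (hfcont.neg.mul hscont)))).sub
          (continuousOn_const.mul (((hccont.mul hmcont).mul hscont).add
            (hCcont.mul (hfcont.neg.mul hscont))))
      exact hcont2.congr (fun x hx => hderiv2 x hx)
  · -- the HJB-type ODE
    intro x hx
    rw [hderiv2 x hx, hderivG x hx]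
    have hσne : (σ x) ^ 2 ≠ 0 := (hσpos x hx).ne'
    have hsne : sDen μ σ x₀ x ≠ 0 := (hspos x).ne'
    have hmden : mDen μ σ x₀ x = 2 / ((σ x) ^ 2 * sDen μ σ x₀ x) := rfl
    rw [hmden]
    have hσ1 : σ x ≠ 0 := fun h => hσne (by rw [h]; ring)
    field_simp
    ring
  · -- the obstacle inequality
    intro w y haw hwy' hyb
    have hwS : w ∈ stInt a b := ⟨haw, lt_trans (EReal.coe_lt_coe_iff.mpr hwy') hyb⟩
    have hyS : y ∈ stInt a b := ⟨lt_trans haw hwy', hyb⟩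
    have hden := hxipos w y hwS hyS hwy'
    have hle : FF μ σ c x₀ a p K γ w y ≤ Fstar := hFstar ▸ hmax w y haw hwy' hyb
    rw [FF, div_le_iff₀ hden] at hle
    simp only []
    linarith
  · -- equality at the optimal pair
    have hwS : wstar ∈ stInt a b := ⟨hws, lt_trans (EReal.coe_lt_coe_iff.mpr hwy) hys⟩
    have hyS : ystar ∈ stInt a b := ⟨lt_trans hws hwy, hys⟩
    have hden := hxipos wstar ystar hwS hyS hwy
    have hkey : Fstar * (xiF μ σ x₀ a ystar - xiF μ σ x₀ a wstar)
        = p * (ystar - wstar) - K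
          + γ * (gF μ σ c x₀ a ystar - gF μ σ c x₀ a wstar) := by
      rw [hFstar, FF, div_mul_cancel₀ _ hden.ne']
    simp only []
    linarith [hkey]
end
end
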